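/- arXiv:1301.6667 — 5 statements merged into one kernel-verified Lean document; each statement's English description precedes it below -/
import Mathlib

section
/- Let S be a set of 2n points on the unit circle in the plane, closed under the antipodal map p ↦ -p. If P is an antipodal polygon on S whose vertices all lie in a closed half-plane bounded by a line through the origin (a thin antipodal polygon), then the origin does not lie in the interior of P; conversely, if the vertices of an antipodal polygon do not all lie in one such closed half-plane, then the origin lies in the interior of P. -/
open MeasureTheory

/-- The point on the unit circle at angle `θ`. -/
noncomputable def pt (θ : ℝ) : ℝ × ℝ := (Real.cos θ, Real.sin θ)

/-- Standard dot product in the plane. -/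
noncomputable def dotp (v w : ℝ × ℝ) : ℝ := v.1 * w.1 + v.2 * w.2

/-- Given angles `θ : Fin n → ℝ` (determining the antipodal point set
`{pt (θ i)} ∪ {-pt (θ i)}`) and a selection `ε`, the `i`-th vertex of the
corresponding antipodal polygon: `pt (θ i)` if `ε i` and `-pt (θ i)` otherwise. -/
noncomputable def vtx {n : ℕ} (θ : Fin n → ℝ) (ε : Fin n → Bool) (i : Fin n) : ℝ × ℝ :=
  if ε i then pt (θ i) else -pt (θ i)

/-- The antipodal polygon determined by the selection `ε`. -/
noncomputable def apoly {n : ℕ} (θ : Fin n → ℝ) (ε : Fin n → Bool) : Set (ℝ × ℝ) :=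
  convexHull ℝ (Set.range (vtx θ ε))

/-- The antipodal polygon is thin: all vertices lie in a closed half-plane
bounded by a line through the origin. -/
def Thin {n : ℕ} (θ : Fin n → ℝ) (ε : Fin n → Bool) : Prop :=
  ∃ v : ℝ × ℝ, v ≠ 0 ∧ ∀ i, 0 ≤ dotp v (vtx θ ε i)

/-- The antipodal polygon is thick: every open half-plane bounded by a line
through the origin contains at least `⌈(n-2)/2⌉ = (n-1)/2` of its vertices. -/
def Thick {n : ℕ} (θ : Fin n → ℝ) (ε : Fin n → Bool) : Prop :=
  ∀ v : ℝ × ℝ, v ≠ 0 →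
    (n - 1) / 2 ≤ Set.ncard {i : Fin n | 0 < dotp v (vtx θ ε i)}

/-- The `j`-th point (indices mod `2*n`) of the antipodal point set in circular
order `pt (θ 0), …, pt (θ (n-1)), -pt (θ 0), …, -pt (θ (n-1))`. -/
noncomputable def spt {n : ℕ} (θ : Fin n → ℝ) (j : ℕ) : ℝ × ℝ :=
  if h : j % (2 * n) < n then pt (θ ⟨j % (2 * n), h⟩)
  else if h2 : j % (2 * n) - n < n then -pt (θ ⟨j % (2 * n) - n, h2⟩) else 0

/-- Whether the `j`-th point (indices mod `2*n`) of the antipodal point set, in the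
circular order `pt (θ 0), …, pt (θ (n-1)), -pt (θ 0), …, -pt (θ (n-1))`,
is a vertex of the antipodal polygon selected by `ε`. -/
def chosen {n : ℕ} (ε : Fin n → Bool) (j : ℕ) : Bool :=
  if h : j % (2 * n) < n then ε ⟨j % (2 * n), h⟩
  else if h2 : j % (2 * n) - n < n then !(ε ⟨j % (2 * n) - n, h2⟩) else false

lemma dotp_f (f : (ℝ × ℝ) →L[ℝ] ℝ) (x : ℝ × ℝ) :
    dotp (f (1,0), f (0,1)) x = f x := by
  have hx : x = x.1 • ((1:ℝ),(0:ℝ)) + x.2 • ((0:ℝ),(1:ℝ)) := by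
    ext <;> simp
  have : f x = x.1 * f (1,0) + x.2 * f (0,1) := by
    conv_lhs => rw [hx]
    simp only [map_add, ContinuousLinearMap.map_smul, smul_eq_mul]
  rw [this, dotp]; ring

lemma dotp_self_pos {v : ℝ × ℝ} (hv : v ≠ 0) : 0 < dotp v v := by
  have h : v.1 ≠ 0 ∨ v.2 ≠ 0 := by
    by_contra h; push_neg at h
    exact hv (Prod.ext h.1 h.2)
  rcases h with h | h <;>
    · simp only [dotp]
      nlinarith [mul_self_pos.mpr h, mul_self_nonneg v.1, mul_self_nonneg v.2]

lemma vtx_dotp_self {n : ℕ} (θ : Fin n → ℝ) (ε : Fin n → Bool) (i : Fin n) :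
    dotp (vtx θ ε i) (vtx θ ε i) = 1 := by
  unfold vtx pt
  split <;>
    · simp only [dotp, Prod.fst_neg, Prod.snd_neg]
      linear_combination Real.sin_sq_add_cos_sq (θ i)

lemma key {n : ℕ} (θ : Fin n → ℝ) (ε : Fin n → Bool)
    (h : (0 : ℝ × ℝ) ∉ interior (apoly θ ε)) : Thin θ ε := by
  rcases Nat.eq_zero_or_pos n with hn | hn
  · subst hn
    exact ⟨(1,0), by norm_num [Prod.ext_iff], fun i => i.elim0⟩
  set R := Set.range (vtx θ ε) with hR
  have hRne : R.Nonempty := ⟨_, Set.mem_range_self ⟨0, hn⟩⟩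
  by_cases hcol : Collinear ℝ R
  · rw [collinear_iff_of_mem (Set.mem_range_self (⟨0, hn⟩ : Fin n))] at hcol
    obtain ⟨d, hd⟩ := hcol
    by_cases hd0 : d = 0
    · refine ⟨vtx θ ε ⟨0, hn⟩, ?_, fun i => ?_⟩
      · intro h0
        have h1 := vtx_dotp_self θ ε ⟨0, hn⟩
        rw [h0] at h1; simp [dotp] at h1
      · obtain ⟨t, ht⟩ := hd (vtx θ ε i) (Set.mem_range_self i)
        rw [ht, hd0]
        simp only [smul_zero, zero_vadd]
        rw [vtx_dotp_self]; norm_num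
    · set w : ℝ × ℝ := (-d.2, d.1) with hw
      have hwne : w ≠ 0 := by
        intro h0
        apply hd0
        rw [Prod.ext_iff] at h0 ⊢
        simp only [hw, Prod.fst_zero, Prod.snd_zero, neg_eq_zero] at h0 ⊢
        exact ⟨h0.2, h0.1⟩
      have hconst : ∀ i, dotp w (vtx θ ε i) = dotp w (vtx θ ε ⟨0, hn⟩) := by
        intro i
        obtain ⟨t, ht⟩ := hd (vtx θ ε i) (Set.mem_range_self i)
        rw [ht]
        simp only [dotp, hw, vadd_eq_add, Prod.fst_add, Prod.snd_add, Prod.smul_fst,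
          Prod.smul_snd, smul_eq_mul]
        ring
      rcases le_or_gt 0 (dotp w (vtx θ ε ⟨0, hn⟩)) with hc | hc
      · exact ⟨w, hwne, fun i => by rw [hconst i]; exact hc⟩
      · refine ⟨-w, neg_ne_zero.mpr hwne, fun i => ?_⟩
        have hneg : dotp (-w) (vtx θ ε i) = -(dotp w (vtx θ ε i)) := by
          simp [dotp]; ring
        rw [hneg, hconst i]; linarith
  · have finst : FiniteDimensional ℝ (vectorSpan ℝ R) := inferInstance
    have h2 : 2 ≤ Module.finrank ℝ (vectorSpan ℝ R) := by
      by_contra hlt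
      push_neg at hlt
      exact hcol (collinear_iff_finrank_le_one.mpr (by omega))
    have htop : vectorSpan ℝ R = ⊤ := by
      apply Submodule.eq_top_of_finrank_eq
      have hle : Module.finrank ℝ (vectorSpan ℝ R) ≤ Module.finrank ℝ (ℝ × ℝ) :=
        Submodule.finrank_le _
      have hfr : Module.finrank ℝ (ℝ × ℝ) = 2 := by
        simp [Module.finrank_prod]
      omega
    have haff : affineSpan ℝ R = ⊤ :=
      (AffineSubspace.affineSpan_eq_top_iff_vectorSpan_eq_top_of_nonempty ℝ (ℝ × ℝ) (ℝ × ℝ) hRne).mpr htop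
    have hconv : Convex ℝ (apoly θ ε) := convex_convexHull ℝ R
    have hint : (interior (apoly θ ε)).Nonempty := by
      rw [hconv.interior_nonempty_iff_affineSpan_eq_top]
      rw [apoly, affineSpan_convexHull]
      exact haff
    obtain ⟨a₀, ha₀⟩ := hint
    obtain ⟨f, hf⟩ := geometric_hahn_banach_open_point hconv.interior isOpen_interior h
    have hf0 : ∀ x ∈ interior (apoly θ ε), f x < 0 := fun x hx => by
      simpa using hf x hx
    have hK : ∀ x ∈ apoly θ ε, f x ≤ 0 := by
      intro x hx
      by_contra hpos
      push_neg at hpos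
      have hfa₀ : f a₀ < 0 := hf0 _ ha₀
      have hD : 0 < f x - f a₀ := by linarith
      set t : ℝ := f x / (f x - f a₀) with htdef
      have ht0 : 0 < t := div_pos hpos hD
      have ht1 : t ≤ 1 := (div_le_one hD).mpr (by linarith)
      have hmem : (1 - t) • x + t • a₀ ∈ interior (apoly θ ε) := by
        apply hconv.combo_self_interior_subset_interior
          (by linarith : (0:ℝ) ≤ 1 - t) ht0 (by ring)
        exact Set.add_mem_add (Set.smul_mem_smul_set hx) (Set.smul_mem_smul_set ha₀)
      have hlt := hf0 _ hmem
      have heval : f ((1 - t) • x + t • a₀) = (1 - t) * f x + t * f a₀ := by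
        simp only [map_add, ContinuousLinearMap.map_smul, smul_eq_mul]
      rw [heval] at hlt
      have hzero : (1 - t) * f x + t * f a₀ = 0 := by
        rw [htdef]; field_simp; ring
      linarith
    refine ⟨-(f (1,0), f (0,1)), ?_, fun i => ?_⟩
    · intro h0
      rw [neg_eq_zero] at h0
      have hda := dotp_f f a₀
      rw [h0] at hda
      simp [dotp] at hda
      have := hf0 _ ha₀
      linarith
    · have hx : vtx θ ε i ∈ apoly θ ε := subset_convexHull ℝ R (Set.mem_range_self i)
      have hle := hK _ hx
      have hdd : dotp (-(f (1,0), f (0,1))) (vtx θ ε i)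
          = -(dotp (f (1,0), f (0,1)) (vtx θ ε i)) := by
        simp [dotp]; ring
      rw [hdd, dotp_f]; linarith

/-- A thin antipodal polygon does not contain the origin in its interior;
a non-thin antipodal polygon contains the origin in its interior. -/
theorem stmt_0 (n : ℕ) (θ : Fin n → ℝ) (hmono : StrictMono θ)
    (hrange : ∀ i, θ i ∈ Set.Ico 0 Real.pi) (ε : Fin n → Bool) :
    (Thin θ ε → (0 : ℝ × ℝ) ∉ interior (apoly θ ε)) ∧
    (¬ Thin θ ε → (0 : ℝ × ℝ) ∈ interior (apoly θ ε)) := by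
  constructor
  · rintro ⟨v, hv, hall⟩ hmem
    have hvv : 0 < dotp v v := dotp_self_pos hv
    have hsub : apoly θ ε ⊆ {x | 0 ≤ dotp v x} := by
      apply convexHull_min
      · rintro x ⟨i, rfl⟩; exact hall i
      · have hlin : IsLinearMap ℝ (dotp v) := by
          constructor
          · intro x y; simp [dotp]; ring
          · intro c x; simp [dotp]; ring
        exact convex_halfSpace_ge hlin 0
    have hnb : apoly θ ε ∈ nhds (0 : ℝ × ℝ) := mem_interior_iff_mem_nhds.mp hmem
    obtain ⟨δ, hδpos, hδ⟩ := Metric.mem_nhds_iff.mp hnb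
    have hvnorm : 0 < ‖v‖ := norm_pos_iff.mpr hv
    set c : ℝ := δ / (2 * ‖v‖) with hc
    have hcpos : 0 < c := by positivity
    have hmem2 : c • (-v) ∈ apoly θ ε := by
      apply hδ
      rw [Metric.mem_ball, dist_zero_right]
      rw [norm_smul, norm_neg]
      rw [Real.norm_eq_abs, abs_of_pos hcpos, hc]
      rw [div_mul_eq_mul_div, mul_comm]
      rw [mul_div_assoc]
      calc ‖v‖ * (δ / (2 * ‖v‖)) = δ / 2 := by field_simp
      _ < δ := by linarith
    have hge := hsub hmem2
    have hcomp : dotp v (c • (-v)) = -c * dotp v v := by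
      simp only [dotp, Prod.smul_fst, Prod.smul_snd, Prod.fst_neg, Prod.snd_neg, smul_eq_mul]
      ring
    rw [Set.mem_setOf_eq, hcomp] at hge
    nlinarith
  · intro hnt
    by_contra hmem
    exact hnt (key θ ε hmem)
end

section
/- Let S be an antipodal point set of 2n points on the unit circle, let p ∈ S, and let ℓ be the line through p and -p (which passes through the origin). Among all triangles having p as a vertex and one vertex of S in each of the two open half-planes determined by ℓ, the triangle formed by p together with its two angular neighbors in S (one on each side of ℓ) has strictly the smallest area. -/
open MeasureTheory

/-- Cross product (determinant) of two plane vectors; `crossp p x` is positive,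
zero, or negative according to which side of the line through `p` and `-p`
the point `x` lies on. -/
noncomputable def crossp (v w : ℝ × ℝ) : ℝ := v.1 * w.2 - v.2 * w.1

/-! ### Algebraic core -/

noncomputable def Ff (α β : ℝ) : ℝ :=
  (1 - α) * Real.sqrt (1 - β ^ 2) + (1 - β) * Real.sqrt (1 - α ^ 2)

lemma Fsymm (α β : ℝ) : Ff α β = Ff β α := by rw [Ff, Ff]; ring

lemma Fneg (α : ℝ) : Ff α (-α) = 2 * Real.sqrt (1 - α ^ 2) := by
  have h : (1:ℝ) - (-α) ^ 2 = 1 - α ^ 2 := by ring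
  rw [Ff, h]; ring

lemma sqrt_pos_of_lt {α : ℝ} (h1 : -1 < α) (h2 : α < 1) : 0 < Real.sqrt (1 - α ^ 2) :=
  Real.sqrt_pos.mpr (by nlinarith)

lemma sq_sqrt' {α : ℝ} (h1 : -1 < α) (h2 : α < 1) : Real.sqrt (1 - α ^ 2) ^ 2 = 1 - α ^ 2 :=
  Real.sq_sqrt (by nlinarith)

lemma Tpos {β γ : ℝ} (hβ1 : -1 < β) (hβ2 : β < 1) (hγ1 : -1 < γ) (hγ2 : γ < 1)
    (h : -β ≤ γ) : 0 < Real.sqrt (1 - β ^ 2) * Real.sqrt (1 - γ ^ 2) + (1 - β) * γ := by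
  have hsβ := sqrt_pos_of_lt hβ1 hβ2
  have hsγ := sqrt_pos_of_lt hγ1 hγ2
  rcases le_or_gt 0 γ with hγ | hγ
  · nlinarith [mul_pos hsβ hsγ]
  · have hβγ : γ ^ 2 ≤ β ^ 2 := by nlinarith
    have hle : Real.sqrt (1 - β ^ 2) ≤ Real.sqrt (1 - γ ^ 2) :=
      Real.sqrt_le_sqrt (by nlinarith)
    have h2 := sq_sqrt' hβ1 hβ2
    nlinarith [mul_le_mul_of_nonneg_left hle hsβ.le]

/-- strict monotonicity in the first argument -/
lemma K1 {β α α' : ℝ} (hβ1 : -1 < β) (hβ2 : β < 1) (hα1 : -1 < α) (hα'2 : α' < 1)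
    (hlow : -β ≤ α) (hlt : α < α') : Ff α' β < Ff α β := by
  have hα2 : α < 1 := hlt.trans hα'2
  have hα'1 : -1 < α' := hα1.trans hlt
  set sβ := Real.sqrt (1 - β ^ 2) with hsβdef
  set sα := Real.sqrt (1 - α ^ 2) with hsαdef
  set sα' := Real.sqrt (1 - α' ^ 2) with hsα'def
  have h1 : sα ^ 2 = 1 - α ^ 2 := sq_sqrt' hα1 hα2
  have h2 : sα' ^ 2 = 1 - α' ^ 2 := sq_sqrt' hα'1 hα'2
  have hS : 0 < sα + sα' := by
    have := sqrt_pos_of_lt hα1 hα2; have := sqrt_pos_of_lt hα'1 hα'2; linarith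
  have hT1 : 0 < sβ * sα + (1 - β) * α := Tpos hβ1 hβ2 hα1 hα2 hlow
  have hT2 : 0 < sβ * sα' + (1 - β) * α' := Tpos hβ1 hβ2 hα'1 hα'2 (hlow.trans hlt.le)
  have key : ((1 - α) * sβ + (1 - β) * sα - ((1 - α') * sβ + (1 - β) * sα')) * (sα + sα')
      = (α' - α) * ((sβ * sα + (1 - β) * α) + (sβ * sα' + (1 - β) * α')) := by
    linear_combination (1 - β) * h1 - (1 - β) * h2
  have hpos : 0 < (α' - α) * ((sβ * sα + (1 - β) * α) + (sβ * sα' + (1 - β) * α')) :=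
    mul_pos (by linarith) (by linarith)
  rw [Ff, Ff, ← hsβdef, ← hsαdef, ← hsα'def]
  nlinarith [key, hpos, hS]

/-- non-strict version -/
lemma K1' {β α α' : ℝ} (hβ1 : -1 < β) (hβ2 : β < 1) (hα1 : -1 < α) (hα'2 : α' < 1)
    (hlow : -β ≤ α) (hle : α ≤ α') : Ff α' β ≤ Ff α β := by
  rcases eq_or_lt_of_le hle with rfl | h
  · exact le_rfl
  · exact (K1 hβ1 hβ2 hα1 hα'2 hlow h).le

/-- comparison with the boundary value when α + β < 0 -/
lemma K2 {α β : ℝ} (hα1 : -1 < α) (hα2 : α < 1) (hβ1 : -1 < β) (hβ2 : β < 1)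
    (h : α + β < 0) : Ff α (-α) < Ff α β := by
  rw [Fneg]
  set sβ := Real.sqrt (1 - β ^ 2) with hsβdef
  set sα := Real.sqrt (1 - α ^ 2) with hsαdef
  have h1 : sα ^ 2 = 1 - α ^ 2 := sq_sqrt' hα1 hα2
  have h2 : sβ ^ 2 = 1 - β ^ 2 := sq_sqrt' hβ1 hβ2
  have hsα := sqrt_pos_of_lt hα1 hα2
  have hsβ := sqrt_pos_of_lt hβ1 hβ2
  have key : ((1 - α) * sβ - (1 + β) * sα) * ((1 - α) * sβ + (1 + β) * sα)
      = (-2) * (α + β) * (1 - α) * (1 + β) := by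
    linear_combination (1-α)^2 * h2 - (1+β)^2 * h1
  have hsum : 0 < (1 - α) * sβ + (1 + β) * sα := by nlinarith
  have hprod : 0 < (-2) * (α + β) * (1 - α) * (1 + β) := by
    have h3 := mul_pos (mul_pos (by linarith : (0:ℝ) < -(α+β)) (by linarith : (0:ℝ) < 1 - α))
      (by linarith : (0:ℝ) < 1 + β)
    nlinarith [h3]
  rw [Ff, ← hsβdef, ← hsαdef]
  nlinarith [key, hsum, hprod]

lemma Kmain {αx αa βy βb : ℝ}
    (hx1 : -1 < αx) (hx2 : αx < 1) (ha1 : -1 < αa) (ha2 : αa < 1)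
    (hy1 : -1 < βy) (hy2 : βy < 1) (hb1 : -1 < βb) (hb2 : βb < 1)
    (hxa : αx ≤ αa) (hyb : βy ≤ βb)
    (hay : 0 ≤ αa + βy) (hxb : 0 ≤ αx + βb)
    (hne : ¬(αx = αa ∧ βy = βb)) : Ff αa βb < Ff αx βy := by
  rcases le_or_gt 0 (αx + βy) with hcase | hcase
  · rcases eq_or_lt_of_le hxa with rfl | hlt
    · have hyb' : βy < βb := lt_of_le_of_ne hyb (fun h => hne ⟨rfl, h⟩)
      calc Ff αx βb = Ff βb αx := Fsymm _ _
        _ < Ff βy αx := K1 hx1 hx2 hy1 hb2 (by linarith) hyb'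
        _ = Ff αx βy := (Fsymm _ _).symm
    · calc Ff αa βb = Ff βb αa := Fsymm _ _
        _ ≤ Ff βy αa := K1' ha1 ha2 hy1 hb2 (by linarith) hyb
        _ = Ff αa βy := (Fsymm _ _).symm
        _ < Ff αx βy := K1 hy1 hy2 hx1 ha2 (by linarith) hlt
  · have hx1' : -1 < -αx := by linarith
    have hx2' : -αx < 1 := by linarith
    have step1 : Ff αx (-αx) < Ff αx βy := K2 hx1 hx2 hy1 hy2 hcase
    have step2 : Ff αa (-αx) ≤ Ff αx (-αx) :=
      K1' hx1' hx2' hx1 ha2 (by linarith) hxa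
    have step3 : Ff αa βb ≤ Ff αa (-αx) := by
      calc Ff αa βb = Ff βb αa := Fsymm _ _
        _ ≤ Ff (-αx) αa := K1' ha1 ha2 hx1' hb2 (by linarith) (by linarith)
        _ = Ff αa (-αx) := (Fsymm _ _).symm
    linarith

/-! ### Volume of a triangle -/

noncomputable def T0 : Set (ℝ × ℝ) := convexHull ℝ {(0,0), (1,0), (0,1)}

lemma vol_translate (p : ℝ × ℝ) (s : Set (ℝ × ℝ)) : volume ((p + ·) '' s) = volume s := by
  have h : (p + ·) '' s = (-p + ·) ⁻¹' s := by
    ext z; simp only [Set.mem_image, Set.mem_preimage]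
    constructor
    · rintro ⟨w, hw, rfl⟩; simpa using hw
    · intro h; exact ⟨-p + z, h, by abel⟩
  rw [h, measure_preimage_add]

lemma vol_tri (p u v : ℝ × ℝ) :
    volume (convexHull ℝ ({p, p + u, p + v} : Set (ℝ × ℝ)))
      = ENNReal.ofReal |crossp u v| * volume T0 := by
  set f := (Matrix.toLin (Module.Basis.finTwoProd ℝ) (Module.Basis.finTwoProd ℝ) !![u.1, v.1; u.2, v.2]) with hf
  have himg : f '' {((0:ℝ),(0:ℝ)), (1,0), (0,1)} = ({0, u, v} : Set (ℝ × ℝ)) := by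
    have h0 : f (0,0) = 0 := by simp [hf]
    have h1 : f (1,0) = u := by simp [hf, Matrix.toLin_finTwoProd_apply]
    have h2 : f (0,1) = v := by simp [hf, Matrix.toLin_finTwoProd_apply]
    rw [Set.image_insert_eq, Set.image_insert_eq, Set.image_singleton, h0, h1, h2]
  have key : volume (convexHull ℝ ({0, u, v} : Set (ℝ × ℝ)))
      = ENNReal.ofReal |crossp u v| * volume T0 := by
    rw [← himg, ← LinearMap.image_convexHull, Measure.addHaar_image_linearMap]
    congr 2
    rw [hf, LinearMap.det_toLin, Matrix.det_fin_two_of, crossp]; ring_nf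
  have htr : ({p, p + u, p + v} : Set (ℝ × ℝ)) = (p + ·) '' ({0, u, v} : Set (ℝ × ℝ)) := by
    rw [Set.image_insert_eq, Set.image_insert_eq, Set.image_singleton, add_zero]
  have hch : convexHull ℝ ((fun x => p + x) '' ({0,u,v} : Set (ℝ × ℝ)))
      = (fun x => p + x) '' convexHull ℝ ({0,u,v} : Set (ℝ × ℝ)) := by
    have h2 := ((AffineEquiv.constVAdd ℝ (ℝ × ℝ) p).toAffineMap.image_convexHull
      ({0,u,v} : Set (ℝ × ℝ))).symm
    exact h2
  rw [htr, hch, vol_translate]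
  exact key

lemma T0_pos : 0 < volume T0 := by
  have hsub : (Set.Icc (0:ℝ) (1/2)) ×ˢ (Set.Icc (0:ℝ) (1/2)) ⊆ T0 := by
    rintro ⟨z1, z2⟩ ⟨hz1, hz2⟩
    simp only [Set.mem_Icc] at hz1 hz2
    have hmem : (Finset.univ : Finset (Fin 3)).centerMass ![1-z1-z2, z1, z2]
        ![((0:ℝ),(0:ℝ)),(1,0),(0,1)] ∈ convexHull ℝ ({(0,0), (1,0), (0,1)} : Set (ℝ × ℝ)) := by
      apply Finset.centerMass_mem_convexHull
      · intro i _; fin_cases i <;> simp <;> linarith [hz1.1, hz1.2, hz2.1, hz2.2]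
      · simp [Fin.sum_univ_three]; linarith
      · intro i _; fin_cases i <;> simp
    have heq : (Finset.univ : Finset (Fin 3)).centerMass ![1-z1-z2, z1, z2]
        ![((0:ℝ),(0:ℝ)),(1,0),(0,1)] = (z1, z2) := by
      rw [Finset.centerMass_eq_of_sum_1]
      · simp [Fin.sum_univ_three, Prod.ext_iff]
      · simp [Fin.sum_univ_three]; ring
    rw [T0]; rw [heq] at hmem; exact hmem
  have : (0 : ENNReal) < volume ((Set.Icc (0:ℝ) (1/2)) ×ˢ (Set.Icc (0:ℝ) (1/2))) := by
    rw [Measure.volume_eq_prod, Measure.prod_prod]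
    simp [Real.volume_Icc]
  exact this.trans_le (measure_mono hsub)

lemma T0_fin : volume T0 < ⊤ := by
  have : T0 ⊆ Set.Icc ((0:ℝ),(0:ℝ)) ((1:ℝ),(1:ℝ)) := by
    apply convexHull_min ?_ (convex_Icc _ _)
    rintro z hz
    simp only [Set.mem_insert_iff, Set.mem_singleton_iff] at hz
    rcases hz with rfl|rfl|rfl <;> simp [Set.mem_Icc, Prod.le_def]
  calc volume T0 ≤ volume (Set.Icc ((0:ℝ),(0:ℝ)) ((1:ℝ),(1:ℝ))) := measure_mono this
    _ < ⊤ := by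
        rw [Measure.volume_eq_prod, Set.Icc_prod_eq, Measure.prod_prod]
        simp [Real.volume_Icc]

/-! ### Geometric reductions -/

lemma cross_dot_sq {p q : ℝ × ℝ} (hp : p.1 ^ 2 + p.2 ^ 2 = 1) (hq : q.1 ^ 2 + q.2 ^ 2 = 1) :
    (crossp p q) ^ 2 + (dotp p q) ^ 2 = 1 := by
  rw [crossp, dotp]
  nlinarith [hp, hq]

lemma dot_bounds {p q : ℝ × ℝ} (hp : p.1 ^ 2 + p.2 ^ 2 = 1) (hq : q.1 ^ 2 + q.2 ^ 2 = 1)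
    (hc : crossp p q ≠ 0) : -1 < dotp p q ∧ dotp p q < 1 := by
  have h := cross_dot_sq hp hq
  have h2 : (crossp p q) ^ 2 > 0 := by positivity
  constructor <;> nlinarith

lemma cross_eq_sqrt {p q : ℝ × ℝ} (hp : p.1 ^ 2 + p.2 ^ 2 = 1) (hq : q.1 ^ 2 + q.2 ^ 2 = 1)
    (hc : 0 < crossp p q) : crossp p q = Real.sqrt (1 - (dotp p q) ^ 2) := by
  have h := cross_dot_sq hp hq
  rw [show (1 - (dotp p q) ^ 2) = (crossp p q) ^ 2 by linarith, Real.sqrt_sq hc.le]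

lemma neg_cross_eq_sqrt {p q : ℝ × ℝ} (hp : p.1 ^ 2 + p.2 ^ 2 = 1) (hq : q.1 ^ 2 + q.2 ^ 2 = 1)
    (hc : crossp p q < 0) : -crossp p q = Real.sqrt (1 - (dotp p q) ^ 2) := by
  have h := cross_dot_sq hp hq
  rw [show (1 - (dotp p q) ^ 2) = (-crossp p q) ^ 2 by ring_nf; linarith,
    Real.sqrt_sq (by linarith)]

lemma cross_sub_eq {p x y : ℝ × ℝ} (hp : p.1 ^ 2 + p.2 ^ 2 = 1) :
    crossp (x - p) (y - p)
      = (1 - dotp p x) * (-(crossp p y)) + (crossp p x) * (1 - dotp p y) := by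
  simp only [crossp, dotp, Prod.fst_sub, Prod.snd_sub]
  linear_combination (-(x.1 * y.2 - x.2 * y.1)) * hp

lemma point_eq_of_dot_cross {p x a : ℝ × ℝ} (hp : p.1 ^ 2 + p.2 ^ 2 = 1)
    (hd : dotp p x = dotp p a) (hc : crossp p x = crossp p a) : x = a := by
  simp only [dotp, crossp] at hd hc
  have h1 : x.1 = a.1 := by linear_combination p.1 * hd - p.2 * hc - (x.1 - a.1) * hp
  have h2 : x.2 = a.2 := by linear_combination p.2 * hd + p.1 * hc - (x.2 - a.2) * hp
  exact Prod.ext h1 h2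

lemma crossp_neg_right (p q : ℝ × ℝ) : crossp p (-q) = -crossp p q := by
  simp [crossp]; ring

lemma dotp_neg_right (p q : ℝ × ℝ) : dotp p (-q) = -dotp p q := by
  simp [dotp]; ring

lemma Ff_nonneg {α β : ℝ} (hα : α ≤ 1) (hβ : β ≤ 1) : 0 ≤ Ff α β := by
  rw [Ff]
  have := Real.sqrt_nonneg (1 - β ^ 2)
  have := Real.sqrt_nonneg (1 - α ^ 2)
  nlinarith

/-- Let S be an antipodal point set on the unit circle, p ∈ S, and ℓ the line
through p and -p. Among triangles with vertex p and one vertex of S in each of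
the two open half-planes of ℓ, the triangle `p a b` formed with the two angular
neighbors `a`, `b` of `p` (the points maximizing the dot product with `p` on
each side of ℓ) has strictly the smallest area. -/
theorem stmt_1 (S : Finset (ℝ × ℝ))
    (hcirc : ∀ q ∈ S, q.1 ^ 2 + q.2 ^ 2 = 1)
    (hanti : ∀ q ∈ S, -q ∈ S)
    (p a b x y : ℝ × ℝ)
    (hp : p ∈ S) (ha : a ∈ S) (hb : b ∈ S) (hx : x ∈ S) (hy : y ∈ S)
    (haside : 0 < crossp p a) (hbside : crossp p b < 0)
    (haneigh : ∀ r ∈ S, 0 < crossp p r → dotp p r ≤ dotp p a)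
    (hbneigh : ∀ r ∈ S, crossp p r < 0 → dotp p r ≤ dotp p b)
    (hxside : 0 < crossp p x) (hyside : crossp p y < 0)
    (hne : ¬ (x = a ∧ y = b)) :
    volume (convexHull ℝ ({p, a, b} : Set (ℝ × ℝ))) <
      volume (convexHull ℝ ({p, x, y} : Set (ℝ × ℝ))) := by
  have hpu := hcirc p hp
  have hau := hcirc a ha
  have hbu := hcirc b hb
  have hxu := hcirc x hx
  have hyu := hcirc y hy
  -- dot products and their bounds
  set αa := dotp p a with hαa
  set αx := dotp p x with hαx
  set βb := dotp p b with hβb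
  set βy := dotp p y with hβy
  obtain ⟨ha1, ha2⟩ := dot_bounds hpu hau haside.ne'
  obtain ⟨hx1, hx2⟩ := dot_bounds hpu hxu hxside.ne'
  obtain ⟨hb1, hb2⟩ := dot_bounds hpu hbu (ne_of_lt hbside)
  obtain ⟨hy1, hy2⟩ := dot_bounds hpu hyu (ne_of_lt hyside)
  -- constraints
  have hxa : αx ≤ αa := haneigh x hx hxside
  have hyb : βy ≤ βb := hbneigh y hy hyside
  have hay : 0 ≤ αa + βy := by
    have hmem := hanti y hy
    have hside : 0 < crossp p (-y) := by rw [crossp_neg_right]; linarith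
    have := haneigh (-y) hmem hside
    rw [dotp_neg_right] at this
    linarith
  have hxb : 0 ≤ αx + βb := by
    have hmem := hanti x hx
    have hside : crossp p (-x) < 0 := by rw [crossp_neg_right]; linarith
    have := hbneigh (-x) hmem hside
    rw [dotp_neg_right] at this
    linarith
  have hne' : ¬(αx = αa ∧ βy = βb) := by
    rintro ⟨h1, h2⟩
    apply hne
    constructor
    · apply point_eq_of_dot_cross hpu h1
      rw [cross_eq_sqrt hpu hxu hxside, cross_eq_sqrt hpu hau haside,
        show dotp p x = dotp p a from h1]
    · apply point_eq_of_dot_cross hpu h2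
      have e1 := neg_cross_eq_sqrt hpu hyu hyside
      have e2 := neg_cross_eq_sqrt hpu hbu hbside
      rw [show dotp p y = dotp p b from h2] at e1
      linarith [e1, e2]
  have hKey : Ff αa βb < Ff αx βy :=
    Kmain hx1 hx2 ha1 ha2 hy1 hy2 hb1 hb2 hxa hyb hay hxb hne'
  -- cross products of the triangles
  have hcab : crossp (a - p) (b - p) = Ff αa βb := by
    rw [cross_sub_eq hpu, Ff, ← hαa, ← hβb,
      ← cross_eq_sqrt hpu hau haside, ← neg_cross_eq_sqrt hpu hbu hbside]
    ring
  have hcxy : crossp (x - p) (y - p) = Ff αx βy := by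
    rw [cross_sub_eq hpu, Ff, ← hαx, ← hβy,
      ← cross_eq_sqrt hpu hxu hxside, ← neg_cross_eq_sqrt hpu hyu hyside]
    ring
  -- volumes
  have hset1 : ({p, a, b} : Set (ℝ × ℝ)) = {p, p + (a - p), p + (b - p)} := by
    simp
  have hset2 : ({p, x, y} : Set (ℝ × ℝ)) = {p, p + (x - p), p + (y - p)} := by
    simp
  rw [hset1, hset2, vol_tri, vol_tri, hcab, hcxy,
    abs_of_nonneg (Ff_nonneg ha2.le hb2.le), abs_of_nonneg (Ff_nonneg hx2.le hy2.le)]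
  have hofreal : ENNReal.ofReal (Ff αa βb) < ENNReal.ofReal (Ff αx βy) :=
    (ENNReal.ofReal_lt_ofReal_iff
      ((Ff_nonneg ha2.le hb2.le).trans_lt hKey)).mpr hKey
  exact ENNReal.mul_lt_mul_left T0_pos.ne' T0_fin.ne hofreal
end

section
/- Let S = {p₁, p₁', p₂, p₂', p₃, p₃'} be an antipodal point set of 6 points on the unit circle with circular order p₁, p₂, p₃, p₁', p₂', p₃'. Then each of the two non-thin antipodal triangles (with vertex sets {p₁, p₂', p₃} and {p₁', p₂, p₃'}) has strictly larger area than every thin antipodal triangle on S. -/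
open MeasureTheory

open Pointwise

noncomputable def Lmap (u v : ℝ × ℝ) : (ℝ × ℝ) →ₗ[ℝ] (ℝ × ℝ) where
  toFun z := (z.1 * u.1 + z.2 * v.1, z.1 * u.2 + z.2 * v.2)
  map_add' a b := by simp [Prod.ext_iff]; constructor <;> ring
  map_smul' c a := by simp [Prod.ext_iff]; constructor <;> ring

lemma det_Lmap (u v : ℝ × ℝ) : LinearMap.det (Lmap u v) = u.1 * v.2 - v.1 * u.2 := by
  rw [← LinearMap.det_toMatrix (Module.Basis.finTwoProd ℝ), Matrix.det_fin_two]
  simp [LinearMap.toMatrix_apply, Lmap, Module.Basis.finTwoProd]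

noncomputable def Tset : Set (ℝ × ℝ) := {z | 0 ≤ z.1 ∧ 0 ≤ z.2 ∧ z.1 + z.2 ≤ 1}

noncomputable def Amap (p u v : ℝ × ℝ) : (ℝ × ℝ) →ᵃ[ℝ] (ℝ × ℝ) where
  toFun z := p + Lmap u v z
  linear := Lmap u v
  map_vadd' a b := by
    simp [vadd_eq_add, map_add]; abel

lemma tri_hull_eq (p q r : ℝ × ℝ) :
    convexHull ℝ {p, q, r}
      = (Amap p (q - p) (r - p)) '' (convexHull ℝ {((0:ℝ),(0:ℝ)), ((1:ℝ),(0:ℝ)), ((0:ℝ),(1:ℝ))}) := by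
  rw [AffineMap.image_convexHull]
  congr 1
  have h0 : Amap p (q-p) (r-p) (0,0) = p := by simp [Amap, Lmap]
  have h1 : Amap p (q-p) (r-p) (1,0) = q := by simp [Amap, Lmap, Prod.ext_iff]
  have h2 : Amap p (q-p) (r-p) (0,1) = r := by simp [Amap, Lmap, Prod.ext_iff]
  rw [Set.image_insert_eq, Set.image_insert_eq, Set.image_singleton, h0, h1, h2]

lemma hull_eq_Tset :
    convexHull ℝ {((0:ℝ),(0:ℝ)), ((1:ℝ),(0:ℝ)), ((0:ℝ),(1:ℝ))} = Tset := by
  apply le_antisymm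
  · apply convexHull_min
    · rintro z (rfl | rfl | rfl) <;> exact ⟨by norm_num, by norm_num, by norm_num⟩
    · rintro x ⟨hx1, hx2, hx3⟩ y ⟨hy1, hy2, hy3⟩ a b ha hb hab
      refine ⟨?_, ?_, ?_⟩ <;>
        simp only [Set.mem_setOf_eq, Prod.fst_add, Prod.snd_add, Prod.smul_fst, Prod.smul_snd,
          smul_eq_mul] <;>
        nlinarith [mul_nonneg ha hx1, mul_nonneg hb hy1, mul_nonneg ha hx2,
          mul_nonneg hb hy2, mul_le_mul_of_nonneg_left hx3 ha,
          mul_le_mul_of_nonneg_left hy3 hb]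
  · rintro z ⟨h1, h2, h3⟩
    have hmem := Convex.sum_mem (R := ℝ)
      (s := convexHull ℝ {((0:ℝ),(0:ℝ)), ((1:ℝ),(0:ℝ)), ((0:ℝ),(1:ℝ))})
      (t := (Finset.univ : Finset (Fin 3)))
      (w := ![1 - z.1 - z.2, z.1, z.2])
      (z := ![((0:ℝ),(0:ℝ)), ((1:ℝ),(0:ℝ)), ((0:ℝ),(1:ℝ))])
      (convex_convexHull ℝ _)
      (by intro i _; fin_cases i <;> simp <;> linarith)
      (by simp [Fin.sum_univ_three]; ring)
      (by intro i _; fin_cases i <;> exact subset_convexHull ℝ _ (by simp))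
    convert hmem using 1
    simp only [Fin.sum_univ_three, Matrix.cons_val_zero, Matrix.cons_val_one, Matrix.head_cons,
      Matrix.cons_val_two, Matrix.tail_cons, Prod.ext_iff, Prod.fst_add, Prod.snd_add,
      Prod.smul_fst, Prod.smul_snd, smul_eq_mul]
    constructor <;> norm_num

lemma Tset_meas : MeasurableSet Tset := by
  have h1 : MeasurableSet {z : ℝ × ℝ | 0 ≤ z.1} := measurableSet_le measurable_const measurable_fst
  have h2 : MeasurableSet {z : ℝ × ℝ | 0 ≤ z.2} := measurableSet_le measurable_const measurable_snd
  have h3 : MeasurableSet {z : ℝ × ℝ | z.1 + z.2 ≤ 1} :=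
    measurableSet_le (measurable_fst.add measurable_snd) measurable_const
  exact (h1.inter (h2.inter h3))

lemma vol_Tset : volume Tset = ENNReal.ofReal (1/2) := by
  rw [Measure.volume_eq_prod, Measure.prod_apply Tset_meas]
  have hslice : ∀ x : ℝ, volume (Prod.mk x ⁻¹' Tset)
      = Set.indicator (Set.Icc (0:ℝ) 1) (fun x => ENNReal.ofReal (1 - x)) x := by
    intro x
    rcases le_or_gt 0 x with hx | hx
    · have : Prod.mk x ⁻¹' Tset = Set.Icc 0 (1 - x) := by
        ext y; simp only [Tset, Set.mem_preimage, Set.mem_setOf_eq, Set.mem_Icc]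
        constructor
        · rintro ⟨_, h1, h2⟩; exact ⟨h1, by linarith⟩
        · rintro ⟨h1, h2⟩; exact ⟨hx, h1, by linarith⟩
      rw [this, Real.volume_Icc]
      rcases le_or_gt x 1 with hx1 | hx1
      · rw [Set.indicator_of_mem (Set.mem_Icc.2 ⟨hx, hx1⟩)]; ring_nf
      · rw [Set.indicator_of_notMem (by simp [Set.mem_Icc]; intro; linarith)]
        rw [ENNReal.ofReal_eq_zero.2 (by linarith)]
    · have : Prod.mk x ⁻¹' Tset = ∅ := by
        ext y; simp [Tset]; intro h; linarith
      rw [this, Set.indicator_of_notMem (by simp [Set.mem_Icc]; intro; linarith)]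
      simp
  simp_rw [hslice]
  rw [lintegral_indicator measurableSet_Icc]
  rw [← ofReal_integral_eq_lintegral_ofReal]
  · congr 1
    rw [MeasureTheory.integral_Icc_eq_integral_Ioc, ← intervalIntegral.integral_of_le (by norm_num)]
    have h0 : ∫ x in (0:ℝ)..1, (1 - x)
        = (∫ _x in (0:ℝ)..1, (1:ℝ)) - ∫ x in (0:ℝ)..1, x := by
      exact intervalIntegral.integral_sub intervalIntegrable_const
        (Continuous.intervalIntegrable continuous_id 0 1)
    rw [h0, integral_id]
    norm_num
  · exact (ContinuousOn.integrableOn_compact isCompact_Icc ((continuous_const.sub continuous_id).continuousOn))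
  · filter_upwards [MeasureTheory.ae_restrict_mem measurableSet_Icc] with x hx
    simp only [Pi.zero_apply, Set.mem_Icc] at hx ⊢; linarith [hx.2]

lemma tri_vol (p q r : ℝ × ℝ) :
    volume (convexHull ℝ {p, q, r})
      = ENNReal.ofReal (|(q.1 - p.1) * (r.2 - p.2) - (r.1 - p.1) * (q.2 - p.2)| / 2) := by
  rw [tri_hull_eq, hull_eq_Tset]
  have himg : (Amap p (q - p) (r - p)) '' Tset
      = (fun x => p + x) '' ((Lmap (q - p) (r - p)) '' Tset) := by
    rw [← Set.image_comp]; rfl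
  rw [himg]
  have h1 : (fun x => p + x) '' ((Lmap (q - p) (r - p)) '' Tset)
      = p +ᵥ ((Lmap (q - p) (r - p)) '' Tset) := rfl
  rw [h1, measure_vadd (μ := volume) p _, Measure.addHaar_image_linearMap, det_Lmap, vol_Tset,
    ← ENNReal.ofReal_mul (abs_nonneg _)]
  congr 1
  simp [Prod.fst_sub, Prod.snd_sub]
  ring

lemma notthin_core (a b c x y : ℝ) (hab : a < b) (hbc : b < c) (hca : c - a < Real.pi)
    (h0 : 0 ≤ x * Real.cos a + y * Real.sin a)
    (h1 : x * Real.cos b + y * Real.sin b ≤ 0)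
    (h2 : 0 ≤ x * Real.cos c + y * Real.sin c)
    (hv : ¬(x = 0 ∧ y = 0)) : False := by
  have p1 : 0 < Real.sin (b - a) :=
    Real.sin_pos_of_pos_of_lt_pi (by linarith) (by linarith)
  have p2 : 0 < Real.sin (c - b) :=
    Real.sin_pos_of_pos_of_lt_pi (by linarith) (by linarith)
  have p3 : 0 < Real.sin (c - a) :=
    Real.sin_pos_of_pos_of_lt_pi (by linarith) (by linarith)
  have hid : Real.sin (c - a) * (x * Real.cos b + y * Real.sin b)
      = Real.sin (c - b) * (x * Real.cos a + y * Real.sin a)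
        + Real.sin (b - a) * (x * Real.cos c + y * Real.sin c) := by
    simp only [Real.sin_sub]; ring
  have hL : Real.sin (c - a) * (x * Real.cos b + y * Real.sin b) ≤ 0 :=
    mul_nonpos_of_nonneg_of_nonpos p3.le h1
  have t1 : 0 ≤ Real.sin (c - b) * (x * Real.cos a + y * Real.sin a) := mul_nonneg p2.le h0
  have t2 : 0 ≤ Real.sin (b - a) * (x * Real.cos c + y * Real.sin c) := mul_nonneg p1.le h2
  have hfa : x * Real.cos a + y * Real.sin a = 0 := by
    have h : Real.sin (c - b) * (x * Real.cos a + y * Real.sin a) = 0 := by linarith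
    rcases mul_eq_zero.1 h with h' | h'
    · exact absurd h' p2.ne'
    · exact h'
  have hfc : x * Real.cos c + y * Real.sin c = 0 := by
    have h : Real.sin (b - a) * (x * Real.cos c + y * Real.sin c) = 0 := by linarith
    rcases mul_eq_zero.1 h with h' | h'
    · exact absurd h' p1.ne'
    · exact h'
  have hx : x * Real.sin (c - a) = 0 := by
    rw [Real.sin_sub]; linear_combination Real.sin c * hfa - Real.sin a * hfc
  have hy : y * Real.sin (c - a) = 0 := by
    rw [Real.sin_sub]; linear_combination (- Real.cos c) * hfa + Real.cos a * hfc
  exact hv ⟨by rcases mul_eq_zero.1 hx with h | h; exact h; exact absurd h p3.ne',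
            by rcases mul_eq_zero.1 hy with h | h; exact h; exact absurd h p3.ne'⟩

lemma range3 {α : Type*} (f : Fin 3 → α) : Set.range f = {f 0, f 1, f 2} := by
  ext x
  simp only [Set.mem_range, Set.mem_insert_iff, Set.mem_singleton_iff]
  constructor
  · rintro ⟨i, rfl⟩; fin_cases i <;> simp
  · rintro (rfl | rfl | rfl)
    exacts [⟨0, rfl⟩, ⟨1, rfl⟩, ⟨2, rfl⟩]


/-- For n = 3, each of the two non-thin antipodal triangles has strictly larger
area than every thin antipodal triangle. -/
theorem stmt_2 (θ : Fin 3 → ℝ) (hmono : StrictMono θ)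
    (hrange : ∀ i, θ i ∈ Set.Ico 0 Real.pi)
    (ε : Fin 3 → Bool) (hε : ε = ![true, false, true] ∨ ε = ![false, true, false])
    (ε' : Fin 3 → Bool) (hthin : Thin θ ε') :
    volume (apoly θ ε') < volume (apoly θ ε) := by
  have hab : θ 0 < θ 1 := hmono (by decide)
  have hbc : θ 1 < θ 2 := hmono (by decide)
  have ha0 : 0 ≤ θ 0 := (hrange 0).1
  have hbπ : θ 1 < Real.pi := (hrange 1).2
  have hcπ : θ 2 < Real.pi := (hrange 2).2
  have p1 : 0 < Real.sin (θ 1 - θ 0) :=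
    Real.sin_pos_of_pos_of_lt_pi (by linarith) (by linarith)
  have p2 : 0 < Real.sin (θ 2 - θ 1) :=
    Real.sin_pos_of_pos_of_lt_pi (by linarith) (by linarith)
  have p3 : 0 < Real.sin (θ 2 - θ 0) :=
    Real.sin_pos_of_pos_of_lt_pi (by linarith) (by linarith)
  set S := Real.sin (θ 1 - θ 0) + Real.sin (θ 2 - θ 1) + Real.sin (θ 2 - θ 0) with hSdef
  have hS : 0 < S := by positivity
  have hvol : volume (apoly θ ε) = ENNReal.ofReal (S / 2) := by
    rcases hε with rfl | rfl
    · have e0 : vtx θ ![true, false, true] 0 = pt (θ 0) := by simp [vtx]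
      have e1 : vtx θ ![true, false, true] 1 = -pt (θ 1) := by simp [vtx]
      have e2 : vtx θ ![true, false, true] 2 = pt (θ 2) := by simp [vtx]
      simp only [apoly, range3, e0, e1, e2]
      rw [tri_vol]
      congr 1
      have hE : ((-pt (θ 1)).1 - (pt (θ 0)).1) * ((pt (θ 2)).2 - (pt (θ 0)).2)
          - ((pt (θ 2)).1 - (pt (θ 0)).1) * ((-pt (θ 1)).2 - (pt (θ 0)).2) = -S := by
        simp only [hSdef, pt, Prod.fst_neg, Prod.snd_neg, Real.sin_sub]; ring
      rw [hE, abs_neg, abs_of_pos hS]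
    · have e0 : vtx θ ![false, true, false] 0 = -pt (θ 0) := by simp [vtx]
      have e1 : vtx θ ![false, true, false] 1 = pt (θ 1) := by simp [vtx]
      have e2 : vtx θ ![false, true, false] 2 = -pt (θ 2) := by simp [vtx]
      simp only [apoly, range3, e0, e1, e2]
      rw [tri_vol]
      congr 1
      have hE : ((pt (θ 1)).1 - (-pt (θ 0)).1) * ((-pt (θ 2)).2 - (-pt (θ 0)).2)
          - ((-pt (θ 2)).1 - (-pt (θ 0)).1) * ((pt (θ 1)).2 - (-pt (θ 0)).2) = -S := by
        simp only [hSdef, pt, Prod.fst_neg, Prod.snd_neg, Real.sin_sub]; ring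
      rw [hE, abs_neg, abs_of_pos hS]
  rw [hvol]
  have key : ∀ X : ℝ, -S < X → X < S →
      ENNReal.ofReal (|X| / 2) < ENNReal.ofReal (S / 2) := by
    intro X hX1 hX2
    rw [ENNReal.ofReal_lt_ofReal_iff (by linarith)]
    have := abs_lt.mpr ⟨hX1, hX2⟩
    linarith
  have q1 := p1; have q2 := p2; have q3 := p3
  rw [Real.sin_sub] at q1 q2 q3
  obtain ⟨v, hv, hvi⟩ := hthin
  have hv' : ¬(v.1 = 0 ∧ v.2 = 0) := fun h => hv (Prod.ext h.1 h.2)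
  have d0 := hvi 0; have d1 := hvi 1; have d2 := hvi 2
  cases h0 : ε' 0 <;> cases h1 : ε' 1 <;> cases h2 : ε' 2 <;>
    simp only [vtx, dotp, pt, h0, h1, h2, if_true, if_false, Bool.false_eq_true,
      Prod.fst_neg, Prod.snd_neg] at d0 d1 d2
  -- 8 goals, in order (f,f,f),(f,f,t),(f,t,f),(f,t,t),(t,f,f),(t,f,t),(t,t,f),(t,t,t)
  case' false.true.false =>
    exact (notthin_core (θ 0) (θ 1) (θ 2) (-v.1) (-v.2) hab hbc (by linarith)
      (by linarith) (by linarith) (by linarith)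
      (fun h => hv' ⟨by linarith [h.1], by linarith [h.2]⟩)).elim
  case' true.false.true =>
    exact (notthin_core (θ 0) (θ 1) (θ 2) v.1 v.2 hab hbc (by linarith)
      (by linarith) (by linarith) (by linarith) hv').elim
  all_goals (
    have e0 : vtx θ ε' 0 = if ε' 0 then pt (θ 0) else -pt (θ 0) := rfl
    have e1 : vtx θ ε' 1 = if ε' 1 then pt (θ 1) else -pt (θ 1) := rfl
    have e2 : vtx θ ε' 2 = if ε' 2 then pt (θ 2) else -pt (θ 2) := rfl
    rw [h0] at e0; rw [h1] at e1; rw [h2] at e2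
    simp only [if_true, if_false, Bool.false_eq_true] at e0 e1 e2
    simp only [apoly, range3, e0, e1, e2]
    rw [tri_vol]
    refine key _ ?_ ?_ <;>
      (simp only [hSdef, pt, Prod.fst_neg, Prod.snd_neg, Real.sin_sub]
       linarith [q1, q2, q3]))
end

section
/- For every even n ≥ 6 there exists an antipodal point set S of 2n points on the unit circle, a thick antipodal polygon P on S, and a non-thick antipodal polygon Q on S, such that Area(Q) > Area(P). -/
open MeasureTheory

section AuxSTMT11
open Set Pointwise


lemma null_line (a b c : ℝ) (hab : ¬(a = 0 ∧ b = 0)) :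
    volume {p : ℝ × ℝ | a * p.1 + b * p.2 = c} = 0 := by
  have hmeas : MeasurableSet {p : ℝ × ℝ | a * p.1 + b * p.2 = c} := by
    apply measurableSet_eq_fun <;> fun_prop
  rw [MeasureTheory.Measure.volume_eq_prod, Measure.prod_apply hmeas]
  by_cases hb : b = 0
  · have ha : a ≠ 0 := by tauto
    have hnull : (volume : Measure ℝ) {x : ℝ | a * x = c} = 0 := by
      have h3 : {x : ℝ | a * x = c} = {c / a} := by
        ext x; simp only [Set.mem_setOf_eq, Set.mem_singleton_iff]
        constructor
        · intro hx; field_simp; linarith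
        · intro hx; rw [hx]; field_simp
      rw [h3]; exact measure_singleton _
    have h1 : (fun x : ℝ => (volume : Measure ℝ) (Prod.mk x ⁻¹' {p : ℝ × ℝ | a * p.1 + b * p.2 = c}))
        =ᵐ[volume] 0 := by
      filter_upwards [compl_mem_ae_iff.mpr hnull] with x hx
      have h2 : (Prod.mk x ⁻¹' {p : ℝ × ℝ | a * p.1 + b * p.2 = c}) = ∅ := by
        ext y
        simp only [Set.mem_preimage, Set.mem_setOf_eq, Set.mem_empty_iff_false, iff_false, hb]
        intro h
        exact hx (by simpa [hb] using h)
      rw [h2]; simp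
    rw [lintegral_congr_ae h1]
    simp
  · have h2 : ∀ x : ℝ, (volume : Measure ℝ) (Prod.mk x ⁻¹' {p : ℝ × ℝ | a * p.1 + b * p.2 = c}) = 0 := by
      intro x
      have h1 : (Prod.mk x ⁻¹' {p : ℝ × ℝ | a * p.1 + b * p.2 = c}) = {(c - a * x)/b} := by
        ext y
        simp only [Set.mem_preimage, Set.mem_setOf_eq, Set.mem_singleton_iff]
        constructor
        · intro h; field_simp; linarith
        · intro h; rw [h]; field_simp; ring
      rw [h1]; exact measure_singleton _
    rw [lintegral_congr h2]
    simp

lemma null_subset_line (a b c : ℝ) (hab : ¬(a = 0 ∧ b = 0)) {s : Set (ℝ × ℝ)}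
    (hs : ∀ p ∈ s, a * p.1 + b * p.2 = c) : volume s = 0 :=
  measure_mono_null (fun p hp => hs p hp) (null_line a b c hab)


lemma mem_tri {v0 v1 v2 p : ℝ × ℝ} {a b c : ℝ} (ha : 0 ≤ a) (hb : 0 ≤ b) (hc : 0 ≤ c)
    (habc : a + b + c = 1) (hp : p = a • v0 + b • v1 + c • v2) :
    p ∈ (convexHull ℝ {v0, v1, v2} : Set (ℝ × ℝ)) := by
  have hco : Convex ℝ (convexHull ℝ {v0, v1, v2} : Set (ℝ × ℝ)) := convex_convexHull ℝ _
  have := hco.sum_mem (t := Finset.univ (α := Fin 3)) (w := ![a,b,c]) (z := ![v0,v1,v2])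
    (by intro i _; fin_cases i <;> simpa)
    (by simp [Fin.sum_univ_three]; linarith)
    (by intro i _; fin_cases i <;> exact subset_convexHull ℝ _ (by simp))
  simpa [Fin.sum_univ_three, hp] using this

lemma stdTri_eq : (convexHull ℝ {((0:ℝ),(0:ℝ)), (1,0), (0,1)} : Set (ℝ × ℝ))
    = {p : ℝ × ℝ | 0 ≤ p.1 ∧ 0 ≤ p.2 ∧ p.1 + p.2 ≤ 1} := by
  apply le_antisymm
  · apply convexHull_min
    · rintro p (rfl | rfl | rfl) <;> norm_num
    · have c1 : Convex ℝ {p : ℝ × ℝ | 0 ≤ p.1} :=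
        convex_halfSpace_ge (IsLinearMap.mk (fun x y => rfl) (fun c x => rfl)) 0
      have c2 : Convex ℝ {p : ℝ × ℝ | 0 ≤ p.2} :=
        convex_halfSpace_ge (IsLinearMap.mk (fun x y => rfl) (fun c x => rfl)) 0
      have c3 : Convex ℝ {p : ℝ × ℝ | p.1 + p.2 ≤ 1} :=
        convex_halfSpace_le (IsLinearMap.mk (fun x y => by simp; ring) (fun c x => by simp; ring)) 1
      exact fun p hp q hq a b ha hb hab => ⟨c1 hp.1 hq.1 ha hb hab,
        c2 hp.2.1 hq.2.1 ha hb hab, c3 hp.2.2 hq.2.2 ha hb hab⟩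
  · rintro ⟨x, y⟩ ⟨hx, hy, hxy⟩
    exact mem_tri (a := 1 - x - y) (b := x) (c := y) (by simp at hxy ⊢; linarith)
      (by simpa using hx) (by simpa using hy) (by ring)
      (by simp [Prod.ext_iff])

lemma vol_stdTri' (S : Set (ℝ × ℝ)) (hS : S = {p : ℝ × ℝ | 0 ≤ p.1 ∧ 0 ≤ p.2 ∧ p.1 + p.2 ≤ 1}) :
    volume S = ENNReal.ofReal (1/2) := by
  subst hS
  have hgint : IntegrableOn (fun x : ℝ => 1 - x) (Set.Ioo (0:ℝ) 1) volume :=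
    ((continuous_const.sub continuous_id).continuousOn.integrableOn_Icc).mono_set Set.Ioo_subset_Icc_self
  have hfint : IntegrableOn (fun _ : ℝ => (0:ℝ)) (Set.Ioo (0:ℝ) 1) volume :=
    integrableOn_const measure_Ioo_lt_top.ne
  have hint : (∫ x in Set.Ioo (0:ℝ) 1, ((fun x : ℝ => 1 - x) - fun _ : ℝ => (0:ℝ)) x) = 1/2 := by
    rw [← MeasureTheory.integral_Ioc_eq_integral_Ioo,
      ← intervalIntegral.integral_of_le (by norm_num : (0:ℝ) ≤ 1)]
    simp only [Pi.sub_apply, sub_zero]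
    rw [intervalIntegral.integral_sub intervalIntegrable_const intervalIntegral.intervalIntegrable_id]
    simp [integral_id]
    norm_num
  have hregion : (volume : Measure (ℝ × ℝ)) (regionBetween (fun _ : ℝ => (0:ℝ)) (fun x : ℝ => 1 - x) (Set.Ioo 0 1))
      = ENNReal.ofReal (1/2) := by
    rw [MeasureTheory.Measure.volume_eq_prod,
      volume_regionBetween_eq_integral hfint hgint measurableSet_Ioo
        (fun x hx => by simp only [Set.mem_Ioo] at hx; linarith), hint]
  apply le_antisymm
  · have hsub : {p : ℝ × ℝ | 0 ≤ p.1 ∧ 0 ≤ p.2 ∧ p.1 + p.2 ≤ 1}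
        ⊆ regionBetween (fun _ : ℝ => (0:ℝ)) (fun x : ℝ => 1 - x) (Set.Ioo 0 1)
          ∪ ({p : ℝ × ℝ | p.1 = 0} ∪ {p : ℝ × ℝ | p.2 = 0} ∪ {p : ℝ × ℝ | p.1 + p.2 = 1}) := by
      rintro ⟨x, y⟩ ⟨hx, hy, hxy⟩
      simp only [Set.mem_union, Set.mem_setOf_eq, regionBetween, Set.mem_Ioo] at *
      by_cases h1 : x = 0
      · tauto
      by_cases h2 : y = 0
      · tauto
      by_cases h3 : x + y = 1
      · tauto
      have hx' : 0 < x := lt_of_le_of_ne hx (Ne.symm h1)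
      have hy' : 0 < y := lt_of_le_of_ne hy (Ne.symm h2)
      have hxy' : x + y < 1 := lt_of_le_of_ne hxy h3
      exact Or.inl ⟨⟨hx', by linarith⟩, hy', by linarith⟩
    calc volume {p : ℝ × ℝ | 0 ≤ p.1 ∧ 0 ≤ p.2 ∧ p.1 + p.2 ≤ 1}
        ≤ _ := measure_mono hsub
      _ ≤ volume (regionBetween (fun _ : ℝ => (0:ℝ)) (fun x : ℝ => 1 - x) (Set.Ioo 0 1))
            + volume ({p : ℝ × ℝ | p.1 = 0} ∪ {p : ℝ × ℝ | p.2 = 0} ∪ {p : ℝ × ℝ | p.1 + p.2 = 1}) :=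
          measure_union_le _ _
      _ ≤ ENNReal.ofReal (1/2) + 0 := by
          apply add_le_add hregion.le
          apply le_of_eq
          apply measure_union_null
          apply measure_union_null
          · exact null_subset_line 1 0 0 (by norm_num) (fun p hp => by simpa using hp)
          · exact null_subset_line 0 1 0 (by norm_num) (fun p hp => by simpa using hp)
          · exact null_subset_line 1 1 1 (by norm_num) (fun p hp => by simp at hp; linarith)
      _ = ENNReal.ofReal (1/2) := by simp
  · rw [← hregion]
    apply measure_mono
    rintro ⟨x, y⟩ hp
    simp only [regionBetween, Set.mem_Ioo, Set.mem_setOf_eq] at hp ⊢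
    obtain ⟨⟨h1, h2⟩, h3, h4⟩ := hp
    exact ⟨le_of_lt h1, le_of_lt h3, by linarith⟩


lemma vol_stdTri : volume (convexHull ℝ {((0:ℝ),(0:ℝ)), (1,0), (0,1)} : Set (ℝ × ℝ))
    = ENNReal.ofReal (1/2) := by
  rw [stdTri_eq]
  exact vol_stdTri' _ rfl

lemma tri_vol_s11 (v0 v1 v2 : ℝ × ℝ) :
    volume (convexHull ℝ {v0, v1, v2} : Set (ℝ × ℝ))
      = ENNReal.ofReal (|(v1.1 - v0.1) * (v2.2 - v0.2) - (v2.1 - v0.1) * (v1.2 - v0.2)| / 2) := by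
  set M : Matrix (Fin 2) (Fin 2) ℝ := !![v1.1 - v0.1, v2.1 - v0.1; v1.2 - v0.2, v2.2 - v0.2] with hM
  set L : (ℝ × ℝ) →ₗ[ℝ] (ℝ × ℝ) := Matrix.toLin (Module.Basis.finTwoProd ℝ) (Module.Basis.finTwoProd ℝ) M with hL
  have hL1 : L (1, 0) = v1 - v0 := by
    simp [hL, hM, Matrix.toLin_apply, Module.Basis.finTwoProd, Matrix.mulVec, Matrix.vecHead,
      Matrix.vecTail, Fin.sum_univ_two, Prod.ext_iff]
  have hL2 : L (0, 1) = v2 - v0 := by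
    simp [hL, hM, Matrix.toLin_apply, Module.Basis.finTwoProd, Matrix.mulVec, Matrix.vecHead,
      Matrix.vecTail, Fin.sum_univ_two, Prod.ext_iff]
  set f : (ℝ × ℝ) →ᵃ[ℝ] (ℝ × ℝ) := ⟨fun p => v0 + L p, L, fun p v => by
    simp [map_add]; module⟩ with hf
  have himg : (convexHull ℝ {v0, v1, v2} : Set (ℝ × ℝ))
      = f '' (convexHull ℝ {((0:ℝ),(0:ℝ)), (1,0), (0,1)}) := by
    rw [AffineMap.image_convexHull]
    congr 1
    rw [Set.image_insert_eq, Set.image_insert_eq, Set.image_singleton]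
    have e0 : f ((0:ℝ),(0:ℝ)) = v0 := by simp [hf]; exact map_zero L
    have e1 : f ((1:ℝ),(0:ℝ)) = v1 := by simp [hf, hL1]
    have e2 : f ((0:ℝ),(1:ℝ)) = v2 := by simp [hf, hL2]
    rw [e0, e1, e2]
  rw [himg]
  have hcomp : f '' (convexHull ℝ {((0:ℝ),(0:ℝ)), (1,0), (0,1)})
      = v0 +ᵥ (L '' (convexHull ℝ {((0:ℝ),(0:ℝ)), (1,0), (0,1)})) := by
    rw [← Set.image_vadd, ← Set.image_comp]
    rfl
  rw [hcomp, measure_vadd, Measure.addHaar_image_linearMap, vol_stdTri]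
  have hdet : LinearMap.det L = (v1.1 - v0.1) * (v2.2 - v0.2) - (v2.1 - v0.1) * (v1.2 - v0.2) := by
    rw [hL, LinearMap.det_toLin, hM, Matrix.det_fin_two_of]
  rw [hdet, ← ENNReal.ofReal_mul (abs_nonneg _)]
  ring_nf

noncomputable def dd (n : ℕ) : ℝ := 1/(100*n)
noncomputable def th (n : ℕ) : Fin n → ℝ := fun i =>
  if (i:ℕ) < 2 then (i:ℕ) * dd n else Real.pi/2 + (((i:ℕ) - 2 : ℕ) : ℝ) * dd n
def epsP (n : ℕ) : Fin n → Bool := fun i => if (i:ℕ) < 2 then true else decide ((i:ℕ) % 2 = 1)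

lemma dd_pos {n : ℕ} (hn : 6 ≤ n) : 0 < dd n := by
  have : (0:ℝ) < n := by exact_mod_cast (by omega : 0 < n)
  unfold dd; positivity

lemma jd_bound {n : ℕ} (hn : 6 ≤ n) {j : ℕ} (h : j ≤ n) : (j:ℝ) * dd n ≤ 1/100 := by
  have hn' : (0:ℝ) < n := by exact_mod_cast (by omega : 0 < n)
  have : (j:ℝ) ≤ n := by exact_mod_cast h
  unfold dd
  rw [mul_one_div, div_le_div_iff₀ (by positivity) (by norm_num)]
  nlinarith

lemma nd_eq {n : ℕ} (hn : 6 ≤ n) : (n:ℝ) * dd n = 1/100 := by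
  have hn' : (n:ℝ) ≠ 0 := by exact_mod_cast (by omega : n ≠ 0)
  unfold dd
  field_simp

lemma ncard_ge_of_inj {n m : ℕ} (S : Set (Fin n)) (f : Fin m → Fin n)
    (hf : Function.Injective f) (hmem : ∀ k, f k ∈ S) : m ≤ S.ncard := by
  have h1 : Set.range f ⊆ S := by rintro _ ⟨k, rfl⟩; exact hmem k
  have h2 := Set.ncard_le_ncard h1 (Set.toFinite S)
  rw [← Set.image_univ, Set.ncard_image_of_injective _ hf, Set.ncard_univ] at h2
  simpa using h2

lemma vtx_even {n : ℕ} (k : ℕ) (hk : 2*k+2 < n) :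
    vtx (th n) (epsP n) ⟨2*k+2, hk⟩ = -pt (Real.pi/2 + (2*(k:ℝ)) * dd n) := by
  have h1 : epsP n ⟨2*k+2, hk⟩ = false := by
    simp only [epsP]
    norm_num [Nat.add_mod, Nat.mul_mod_right]
    omega
  have h2 : th n ⟨2*k+2, hk⟩ = Real.pi/2 + (2*(k:ℝ)) * dd n := by
    simp only [th]
    rw [if_neg (by omega)]
    have e : (2*k+2) - 2 = 2*k := by omega
    rw [e]
    push_cast
    ring
  simp [vtx, h1, h2]

lemma vtx_odd {n : ℕ} (k : ℕ) (hk : 2*k+3 < n) :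
    vtx (th n) (epsP n) ⟨2*k+3, hk⟩ = pt (Real.pi/2 + (2*(k:ℝ)+1) * dd n) := by
  have h1 : epsP n ⟨2*k+3, hk⟩ = true := by
    simp only [epsP]
    norm_num [Nat.add_mod, Nat.mul_mod_right]
  have h2 : th n ⟨2*k+3, hk⟩ = Real.pi/2 + (2*(k:ℝ)+1) * dd n := by
    simp only [th]
    rw [if_neg (by omega)]
    have e : (2*k+3) - 2 = 2*k+1 := by omega
    rw [e]
    push_cast
    ring
  simp [vtx, h1, h2]

lemma vtx_zero {n : ℕ} (h0 : 0 < n) :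
    vtx (th n) (epsP n) ⟨0, h0⟩ = pt 0 := by
  have h1 : epsP n ⟨0, h0⟩ = true := by simp [epsP]
  have h2 : th n ⟨0, h0⟩ = 0 := by simp [th]
  simp [vtx, h1, h2]

lemma vtx_one {n : ℕ} (h1n : 1 < n) :
    vtx (th n) (epsP n) ⟨1, h1n⟩ = pt (dd n) := by
  have h1 : epsP n ⟨1, h1n⟩ = true := by simp [epsP]
  have h2 : th n ⟨1, h1n⟩ = dd n := by simp [th]
  simp [vtx, h1, h2]

set_option maxHeartbeats 1000000 in
lemma thick_P {n : ℕ} (hn : 6 ≤ n) (he : Even n) : Thick (th n) (epsP n) := by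
  intro v hv
  -- setup: polar form of v
  set z : ℂ := ⟨v.1, v.2⟩ with hz
  have hz0 : z ≠ 0 := by
    intro h
    apply hv
    have h1 : z.re = 0 := by rw [h]; simp
    have h2 : z.im = 0 := by rw [h]; simp
    exact Prod.ext h1 h2
  set r : ℝ := ‖z‖ with hr
  have hrpos : 0 < r := norm_pos_iff.mpr hz0
  set α : ℝ := Complex.arg z with hα
  have hcos : r * Real.cos α = v.1 := by
    rw [hα, Complex.cos_arg hz0]
    field_simp
    rfl
  have hsin : r * Real.sin α = v.2 := by
    rw [hα, Complex.sin_arg]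
    field_simp
    rfl
  have hdot : ∀ ψ : ℝ, dotp v (pt ψ) = r * Real.cos (ψ - α) := by
    intro ψ
    rw [Real.cos_sub]
    simp only [dotp, pt]
    rw [← hcos, ← hsin]
    ring
  have hpos : ∀ ψ : ℝ, 0 < Real.cos (ψ - α) → 0 < dotp v (pt ψ) := by
    intro ψ h; rw [hdot]; positivity
  have hneg : ∀ ψ : ℝ, Real.cos (ψ - α) < 0 → 0 < dotp v (-pt ψ) := by
    intro ψ h
    have : dotp v (-pt ψ) = -(r * Real.cos (ψ - α)) := by
      rw [← hdot]; simp [dotp]; ring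
    rw [this]
    nlinarith
  -- numeric facts
  have hπ3 : (3:ℝ) < Real.pi := Real.pi_gt_three
  have hπ4 : Real.pi < 3.15 := by
    have := Real.pi_lt_d2
    linarith
  have hd : 0 < dd n := dd_pos hn
  have hαIoc : α ∈ Set.Ioc (-Real.pi) Real.pi := ⟨Complex.neg_pi_lt_arg z, Complex.arg_le_pi z⟩
  have hNN : (n - 1) / 2 = (n - 2) / 2 := by
    obtain ⟨m, hm⟩ := he; omega
  rw [hNN]
  set S := {i : Fin n | 0 < dotp v (vtx (th n) (epsP n) i)} with hS
  -- bounds for pair offsets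
  have hkb : ∀ k : Fin ((n-2)/2), 2 * (k:ℕ) + 3 < n := by
    intro k; have := k.2; omega
  have hkb' : ∀ k : Fin ((n-2)/2), 2 * (k:ℕ) + 2 < n := by
    intro k; have := k.2; omega
  have hoff : ∀ k : Fin ((n-2)/2), (2*(k:ℝ)+1) * dd n ≤ 1/100 := by
    intro k
    have h1 : (2*(k:ℕ)+1) ≤ n := by have := k.2; omega
    have := jd_bound hn h1
    push_cast at this
    linarith
  have hoff' : ∀ k : Fin ((n-2)/2), (0:ℝ) ≤ 2*(k:ℝ) * dd n := by
    intro k; positivity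
  have hoff'' : ∀ k : Fin ((n-2)/2), 2*(k:ℝ) * dd n ≤ 1/100 := by
    intro k
    have := hoff k
    have := hd
    nlinarith [hoff k]
  -- case analysis on α
  rcases le_or_gt (Real.pi/2) α with hc2 | hc2'
  · -- C2 : all odd vertices
    apply ncard_ge_of_inj S (fun k => ⟨2*(k:ℕ)+3, hkb k⟩)
    · intro k k' hkk
      simp only [Fin.mk.injEq] at hkk
      exact Fin.ext (by omega)
    · intro k
      rw [hS, Set.mem_setOf_eq, vtx_odd _ (hkb k)]
      apply hpos
      apply Real.cos_pos_of_mem_Ioo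
      constructor
      · have := hαIoc.2; have := hoff k; have h0 : (0:ℝ) ≤ (2*(k:ℝ)+1) * dd n := by positivity
        nlinarith
      · have := hoff k
        nlinarith
  rcases le_or_gt 0 α with hc1 | hc1'
  · -- C1 : 0 ≤ α < π/2
    classical
    apply ncard_ge_of_inj S (fun k =>
      if 2*(k:ℝ) * dd n > α then ⟨2*(k:ℕ)+2, hkb' k⟩
      else if (2*(k:ℝ)+1) * dd n < α then ⟨2*(k:ℕ)+3, hkb k⟩
      else ⟨0, by omega⟩)
    · intro k k' hkk
      apply Fin.ext
      dsimp only at hkk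
      split_ifs at hkk with b1 b1' b2' b1' b2 b2' b2 b2' <;>
        simp only [Fin.mk.injEq] at hkk ⊢ <;> try omega
      -- remaining: both "bad"
      push_neg at b1 b1' b2 b2'
      by_contra hne
      rcases Nat.lt_or_ge (k:ℕ) (k':ℕ) with hlt | hge
      · have h6 : (2*(k:ℝ)+1) < 2*(k':ℝ) := by
          have : ((k:ℕ):ℝ) + 1 ≤ ((k':ℕ):ℝ) := by exact_mod_cast Nat.succ_le_of_lt hlt
          linarith
        nlinarith
      · have hlt : (k':ℕ) < (k:ℕ) := by omega
        have h6 : (2*(k':ℝ)+1) < 2*(k:ℝ) := by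
          have : ((k':ℕ):ℝ) + 1 ≤ ((k:ℕ):ℝ) := by exact_mod_cast Nat.succ_le_of_lt hlt
          linarith
        nlinarith
    · intro k
      rw [hS, Set.mem_setOf_eq]
      by_cases b1 : 2*(k:ℝ) * dd n > α
      · rw [if_pos b1, vtx_even _ (hkb' k)]
        apply hneg
        apply Real.cos_neg_of_pi_div_two_lt_of_lt
        · have := hoff'' k; linarith
        · have := hoff'' k; nlinarith
      · rw [if_neg b1]
        by_cases b2 : (2*(k:ℝ)+1) * dd n < α
        · rw [if_pos b2, vtx_odd _ (hkb k)]
          apply hpos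
          apply Real.cos_pos_of_mem_Ioo
          have h0 : (0:ℝ) ≤ (2*(k:ℝ)+1) * dd n := by positivity
          constructor
          · nlinarith
          · nlinarith
        · rw [if_neg b2, vtx_zero (by omega)]
          apply hpos
          apply Real.cos_pos_of_mem_Ioo
          constructor
          · nlinarith
          · nlinarith
  rcases le_or_gt (1/100 - Real.pi) α with hc3 | hc3'
  · -- C3 : all even vertices
    apply ncard_ge_of_inj S (fun k => ⟨2*(k:ℕ)+2, hkb' k⟩)
    · intro k k' hkk
      simp only [Fin.mk.injEq] at hkk
      exact Fin.ext (by omega)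
    · intro k
      rw [hS, Set.mem_setOf_eq, vtx_even _ (hkb' k)]
      apply hneg
      apply Real.cos_neg_of_pi_div_two_lt_of_lt
      · have := hoff' k; linarith
      · have h1 := hoff'' k
        have h3 : (2*(k:ℕ)) < n := by have := k.2; omega
        have h4 : (2*(k:ℝ)) < (n:ℝ) := by exact_mod_cast h3
        have h5 := nd_eq hn
        have h2 : 2*(k:ℝ) * dd n < 1/100 := by nlinarith
        linarith
  · -- C4 : -π < α ≤ 1/100 - π
    classical
    set β : ℝ := α + Real.pi with hβ
    have hβ1 : 0 < β := by have := hαIoc.1; simp [hβ]; linarith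
    have hβ2 : β < 1/100 := by simp [hβ]; linarith
    apply ncard_ge_of_inj S (fun k =>
      if 2*(k:ℝ) * dd n < β then ⟨2*(k:ℕ)+2, hkb' k⟩ else ⟨2*(k:ℕ)+3, hkb k⟩)
    · intro k k' hkk
      apply Fin.ext
      dsimp only at hkk
      split_ifs at hkk <;> simp only [Fin.mk.injEq] at hkk <;> omega
    · intro k
      rw [hS, Set.mem_setOf_eq]
      by_cases b1 : 2*(k:ℝ) * dd n < β
      · rw [if_pos b1, vtx_even _ (hkb' k)]
        apply hneg
        have hx : Real.pi/2 + 2*(k:ℝ) * dd n - α = 3*Real.pi/2 + 2*(k:ℝ) * dd n - β := by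
          rw [hβ]; ring
        rw [hx]
        apply Real.cos_neg_of_pi_div_two_lt_of_lt
        · have := hoff' k; nlinarith
        · nlinarith
      · rw [if_neg b1, vtx_odd _ (hkb k)]
        push_neg at b1
        apply hpos
        have hx : Real.pi/2 + (2*(k:ℝ)+1) * dd n - α
            = (3*Real.pi/2 + (2*(k:ℝ)+1) * dd n - β - 2*Real.pi) + 2*Real.pi := by
          rw [hβ]; ring
        rw [hx, Real.cos_add_two_pi]
        apply Real.cos_pos_of_mem_Ioo
        constructor
        · nlinarith
        · have := hoff k; nlinarith

def epsQ (n : ℕ) : Fin n → Bool := fun i => decide ((i:ℕ) = 0 ∨ (i:ℕ) = 2)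

lemma vtxQ_two {n : ℕ} (h : 2 < n) :
    vtx (th n) (epsQ n) ⟨2, h⟩ = pt (Real.pi/2) := by
  have h1 : epsQ n ⟨2, h⟩ = true := by simp [epsQ]
  have h2 : th n ⟨2, h⟩ = Real.pi/2 := by simp [th]
  simp [vtx, h1, h2]

lemma not_thick_Q {n : ℕ} (hn : 6 ≤ n) : ¬ Thick (th n) (epsQ n) := by
  intro hT
  have hd := dd_pos hn
  have hπ3 : (3:ℝ) < Real.pi := Real.pi_gt_three
  have h2 := hT (0,1) (by simp [Prod.ext_iff])
  have hsub : {i : Fin n | 0 < dotp (0,1) (vtx (th n) (epsQ n) i)} ⊆ {(⟨2, by omega⟩ : Fin n)} := by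
    intro i hi
    simp only [Set.mem_setOf_eq] at hi
    simp only [Set.mem_singleton_iff]
    by_contra hne
    have hv2 : (i:ℕ) ≠ 2 := fun h => hne (Fin.ext h)
    have key : dotp (0,1) (vtx (th n) (epsQ n) i) ≤ 0 := by
      rcases Nat.lt_or_ge (i:ℕ) 2 with hlt | hge
      · -- i = 0 or 1
        rcases Nat.lt_or_ge (i:ℕ) 1 with h0 | h1
        · have h0' : (i:ℕ) = 0 := by omega
          have he : epsQ n i = true := by simp [epsQ, h0']
          have hth : th n i = 0 := by simp [th, hlt, h0']
          simp [vtx, he, hth, dotp, pt]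
        · have h1' : (i:ℕ) = 1 := by omega
          have he : epsQ n i = false := by simp [epsQ, h1']
          have hth : th n i = dd n := by simp [th, hlt, h1']
          simp only [vtx, he, hth, dotp, pt, Bool.false_eq_true, if_false]
          have : Real.sin (dd n) > 0 := Real.sin_pos_of_pos_of_lt_pi hd (by
            have := jd_bound hn (le_refl n)
            have : dd n ≤ 1/100 := by
              have h6 := nd_eq hn
              have : (6:ℝ) ≤ n := by exact_mod_cast hn
              nlinarith
            linarith)
          simp
          nlinarith
      · -- i ≥ 3
        have hge3 : 3 ≤ (i:ℕ) := by omega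
        have he : epsQ n i = false := by
          simp only [epsQ, decide_eq_false_iff_not]
          omega
        have hth : th n i = Real.pi/2 + (((i:ℕ) - 2 : ℕ) : ℝ) * dd n := by
          simp only [th, if_neg (by omega : ¬ (i:ℕ) < 2)]
        have hub : (((i:ℕ) - 2 : ℕ) : ℝ) * dd n ≤ 1/100 := jd_bound hn (by omega)
        have hlb : (0:ℝ) ≤ (((i:ℕ) - 2 : ℕ) : ℝ) * dd n := by positivity
        simp only [vtx, he, hth, dotp, pt, Bool.false_eq_true, if_false]
        have hsin : Real.sin (Real.pi/2 + (((i:ℕ) - 2 : ℕ) : ℝ) * dd n) > 0 :=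
          Real.sin_pos_of_pos_of_lt_pi (by linarith) (by linarith)
        simp
        nlinarith
    linarith
  have hcard := Set.ncard_le_ncard hsub (Set.toFinite _)
  rw [Set.ncard_singleton] at hcard
  omega

lemma dd_le {n : ℕ} (hn : 6 ≤ n) : dd n ≤ 1/100 := by
  have h1 := jd_bound hn (le_refl n)
  have h2 := nd_eq hn
  have h3 : (6:ℝ) ≤ n := by exact_mod_cast hn
  have h4 := dd_pos hn
  nlinarith

set_option maxHeartbeats 2000000 in
lemma volP_le {n : ℕ} (hn : 6 ≤ n) :
    volume (convexHull ℝ (Set.range (vtx (th n) (epsP n)))) ≤ ENNReal.ofReal (10609/10000) := by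
  have hd := dd_pos hn
  have hdle := dd_le hn
  have hπ3 : (3:ℝ) < Real.pi := Real.pi_gt_three
  set K : Set (ℝ × ℝ) := {p : ℝ × ℝ | -(1/100) ≤ p.1 ∧ p.1 + p.2 ≤ 51/50 ∧ p.1 - p.2 ≤ 51/50}
    with hK
  have hconv : Convex ℝ K := by
    intro p hp q hq a b ha hb hab
    obtain ⟨hp1, hp2, hp3⟩ := hp
    obtain ⟨hq1, hq2, hq3⟩ := hq
    refine ⟨?_, ?_, ?_⟩ <;>
      simp only [Prod.fst_add, Prod.snd_add, Prod.smul_fst, Prod.smul_snd, smul_eq_mul] <;>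
      nlinarith
  have hsub : Set.range (vtx (th n) (epsP n)) ⊆ K := by
    rintro _ ⟨i, rfl⟩
    -- the vertex is ± pt (th n i) and th n i ∈ [0, π/2 + 1/100] with useful coords
    have hcases : vtx (th n) (epsP n) i = pt (th n i) ∨ vtx (th n) (epsP n) i = -pt (th n i) := by
      unfold vtx; split_ifs <;> simp
    rcases Nat.lt_or_ge (i:ℕ) 2 with hlt | hge
    · -- th n i = i * dd n ∈ [0, 1/100]
      have hth : th n i = (i:ℕ) * dd n := by simp [th, hlt]
      have hcases : vtx (th n) (epsP n) i = pt (th n i) := by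
        unfold vtx
        rw [if_pos (show epsP n i = true from by simp [epsP, hlt])]
      have hx0 : (0:ℝ) ≤ th n i := by rw [hth]; positivity
      have hx1 : th n i ≤ 1/100 := by rw [hth]; exact jd_bound hn (by omega)
      have hcos0 : 0 ≤ Real.cos (th n i) := Real.cos_nonneg_of_mem_Icc ⟨by linarith, by linarith⟩
      have hcos1 : Real.cos (th n i) ≤ 1 := Real.cos_le_one _
      have hsin0 : 0 ≤ Real.sin (th n i) := Real.sin_nonneg_of_nonneg_of_le_pi hx0 (by linarith)
      have hsin1 : Real.sin (th n i) ≤ 1/100 := le_trans (Real.sin_le hx0) hx1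
      rw [hcases]
      refine ⟨?_, ?_, ?_⟩ <;> simp only [pt] <;> norm_num <;> nlinarith
    · -- th n i = π/2 + x, x ∈ [0, 1/100]
      have hth : th n i = Real.pi/2 + (((i:ℕ) - 2 : ℕ) : ℝ) * dd n := by
        simp only [th, if_neg (by omega : ¬ (i:ℕ) < 2)]
      set x := (((i:ℕ) - 2 : ℕ) : ℝ) * dd n with hxdef
      have hx0 : (0:ℝ) ≤ x := by positivity
      have hx1 : x ≤ 1/100 := jd_bound hn (by omega)
      have hc : Real.cos (th n i) = - Real.sin x := by rw [hth, add_comm, Real.cos_add_pi_div_two]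
      have hs : Real.sin (th n i) = Real.cos x := by rw [hth, add_comm, Real.sin_add_pi_div_two]
      have hcos0 : 0 ≤ Real.cos x := Real.cos_nonneg_of_mem_Icc ⟨by linarith, by linarith⟩
      have hcos1 : Real.cos x ≤ 1 := Real.cos_le_one _
      have hsin0 : 0 ≤ Real.sin x := Real.sin_nonneg_of_nonneg_of_le_pi hx0 (by linarith)
      have hsin1 : Real.sin x ≤ 1/100 := le_trans (Real.sin_le hx0) hx1
      rcases hcases with h | h <;> rw [h] <;>
        refine ⟨?_, ?_, ?_⟩ <;>
        simp only [pt, Prod.fst_neg, Prod.snd_neg, hc, hs] <;> norm_num <;> nlinarith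
  have hhull : convexHull ℝ (Set.range (vtx (th n) (epsP n))) ⊆ K := convexHull_min hsub hconv
  refine le_trans (measure_mono hhull) ?_
  -- volume of K
  have hgint : IntegrableOn (fun x : ℝ => (51/50 - x) - (x - 51/50)) (Set.Ioo (-(1/100):ℝ) (51/50)) volume := by
    apply ContinuousOn.integrableOn_Icc (by fun_prop) |>.mono_set Set.Ioo_subset_Icc_self
  have hfint : IntegrableOn (fun x : ℝ => x - 51/50) (Set.Ioo (-(1/100):ℝ) (51/50)) volume := by
    apply ContinuousOn.integrableOn_Icc (by fun_prop) |>.mono_set Set.Ioo_subset_Icc_self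
  have hgint' : IntegrableOn (fun x : ℝ => 51/50 - x) (Set.Ioo (-(1/100):ℝ) (51/50)) volume := by
    apply ContinuousOn.integrableOn_Icc (by fun_prop) |>.mono_set Set.Ioo_subset_Icc_self
  have hint : (∫ y in Set.Ioo (-(1/100):ℝ) (51/50), ((fun x : ℝ => 51/50 - x) - (fun x : ℝ => x - 51/50)) y)
      = 10609/10000 := by
    rw [← MeasureTheory.integral_Ioc_eq_integral_Ioo,
      ← intervalIntegral.integral_of_le (by norm_num : (-(1/100):ℝ) ≤ 51/50)]
    simp only [Pi.sub_apply]
    rw [intervalIntegral.integral_sub (by apply ContinuousOn.intervalIntegrable; fun_prop)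
      (by apply ContinuousOn.intervalIntegrable; fun_prop)]
    rw [intervalIntegral.integral_sub (by apply ContinuousOn.intervalIntegrable; fun_prop)
      (by apply ContinuousOn.intervalIntegrable; fun_prop),
      intervalIntegral.integral_sub (by apply ContinuousOn.intervalIntegrable; fun_prop)
      (by apply ContinuousOn.intervalIntegrable; fun_prop)]
    norm_num [integral_id]
  have hregion : (volume : Measure (ℝ × ℝ))
      (regionBetween (fun x : ℝ => x - 51/50) (fun x : ℝ => 51/50 - x) (Set.Ioo (-(1/100)) (51/50)))
      = ENNReal.ofReal (10609/10000) := by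
    rw [MeasureTheory.Measure.volume_eq_prod,
      volume_regionBetween_eq_integral hfint hgint' measurableSet_Ioo
        (fun x hx => by simp only [Set.mem_Ioo] at hx; linarith), ← hint]
  have hcover : K ⊆ regionBetween (fun x : ℝ => x - 51/50) (fun x : ℝ => 51/50 - x) (Set.Ioo (-(1/100)) (51/50))
      ∪ ({p : ℝ × ℝ | p.1 = -(1/100)} ∪ {p : ℝ × ℝ | p.1 + p.2 = 51/50} ∪ {p : ℝ × ℝ | p.1 - p.2 = 51/50}) := by
    rintro ⟨x, y⟩ ⟨h1, h2, h3⟩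
    simp only [Set.mem_union, Set.mem_setOf_eq, regionBetween, Set.mem_Ioo] at *
    by_cases e1 : x = -(1/100)
    · tauto
    by_cases e2 : x + y = 51/50
    · tauto
    by_cases e3 : x - y = 51/50
    · tauto
    left
    have h1' : -(1/100) < x := lt_of_le_of_ne h1 (Ne.symm e1)
    have h2' : x + y < 51/50 := lt_of_le_of_ne h2 e2
    have h3' : x - y < 51/50 := lt_of_le_of_ne h3 e3
    exact ⟨⟨h1', by linarith⟩, by constructor <;> linarith⟩
  calc volume K ≤ _ := measure_mono hcover
    _ ≤ volume (regionBetween (fun x : ℝ => x - 51/50) (fun x : ℝ => 51/50 - x) (Set.Ioo (-(1/100)) (51/50)))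
        + volume ({p : ℝ × ℝ | p.1 = -(1/100)} ∪ {p : ℝ × ℝ | p.1 + p.2 = 51/50} ∪ {p : ℝ × ℝ | p.1 - p.2 = 51/50}) :=
      measure_union_le _ _
    _ ≤ ENNReal.ofReal (10609/10000) + 0 := by
        apply add_le_add hregion.le
        apply le_of_eq
        apply measure_union_null
        apply measure_union_null
        · exact null_subset_line 1 0 (-(1/100)) (by norm_num) (fun p hp => by simpa using hp)
        · exact null_subset_line 1 1 (51/50) (by norm_num) (fun p hp => by simp at hp; linarith)
        · exact null_subset_line 1 (-1) (51/50) (by norm_num) (fun p hp => by simp at hp; linarith)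
    _ = ENNReal.ofReal (10609/10000) := by simp

set_option maxHeartbeats 2000000 in
lemma volQ_ge {n : ℕ} (hn : 6 ≤ n) :
    ENNReal.ofReal (149/100) ≤ volume (convexHull ℝ (Set.range (vtx (th n) (epsQ n)))) := by
  have hd := dd_pos hn
  have hdle := dd_le hn
  have hπ3 : (3:ℝ) < Real.pi := Real.pi_gt_three
  set d : ℝ := dd n with hddef
  have hs0 : 0 ≤ Real.sin d := Real.sin_nonneg_of_nonneg_of_le_pi (le_of_lt hd) (by linarith)
  have hs1 : Real.sin d ≤ 1/100 := le_trans (Real.sin_le (le_of_lt hd)) hdle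
  have hc0 : (99/100 : ℝ) ≤ Real.cos d := by
    have h1 : 1 - d^2/2 ≤ Real.cos d := Real.one_sub_sq_div_two_le_cos
    nlinarith
  have hc1 : Real.cos d ≤ 1 := Real.cos_le_one _
  set A : ℝ × ℝ := (1, 0) with hA
  set B : ℝ × ℝ := (0, 1) with hB
  set C : ℝ × ℝ := (-Real.cos d, -Real.sin d) with hC
  set D : ℝ × ℝ := (Real.sin d, -Real.cos d) with hD
  -- the four relevant vertices are in the range
  have hmemA : A ∈ Set.range (vtx (th n) (epsQ n)) := by
    refine ⟨⟨0, by omega⟩, ?_⟩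
    have h1 : epsQ n ⟨0, by omega⟩ = true := by simp [epsQ]
    have h2 : th n ⟨0, by omega⟩ = 0 := by simp [th]
    simp [vtx, h1, h2, pt, hA]
  have hmemB : B ∈ Set.range (vtx (th n) (epsQ n)) := by
    refine ⟨⟨2, by omega⟩, ?_⟩
    have h1 : epsQ n ⟨2, by omega⟩ = true := by simp [epsQ]
    have h2 : th n ⟨2, by omega⟩ = Real.pi/2 := by simp [th]
    simp [vtx, h1, h2, pt, hB]
  have hmemC : C ∈ Set.range (vtx (th n) (epsQ n)) := by
    refine ⟨⟨1, by omega⟩, ?_⟩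
    have h1 : epsQ n ⟨1, by omega⟩ = false := by simp [epsQ]
    have h2 : th n ⟨1, by omega⟩ = d := by simp [th, hddef]
    simp [vtx, h1, h2, pt, hC, Prod.ext_iff]
  have hmemD : D ∈ Set.range (vtx (th n) (epsQ n)) := by
    refine ⟨⟨3, by omega⟩, ?_⟩
    have h1 : epsQ n ⟨3, by omega⟩ = false := by simp [epsQ]
    have h2 : th n ⟨3, by omega⟩ = Real.pi/2 + d := by
      simp only [th]
      norm_num
      exact hddef.symm
    simp only [vtx, h1, h2, Bool.false_eq_true, if_false, pt, hD]
    rw [add_comm, Real.cos_add_pi_div_two, Real.sin_add_pi_div_two]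
    simp [Prod.ext_iff]
  -- triangle volumes
  have hT1 : volume (convexHull ℝ {A, B, D} : Set (ℝ × ℝ))
      = ENNReal.ofReal ((1 + Real.cos d - Real.sin d)/2) := by
    rw [tri_vol_s11]
    congr 1
    have e : ((B.1 - A.1) * (D.2 - A.2) - (D.1 - A.1) * (B.2 - A.2))
        = 1 + Real.cos d - Real.sin d := by
      simp [hA, hB, hD]; ring
    rw [e, abs_of_nonneg (by nlinarith)]
  have hT2 : volume (convexHull ℝ {B, C, D} : Set (ℝ × ℝ))
      = ENNReal.ofReal ((1 + Real.cos d + Real.sin d)/2) := by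
    rw [tri_vol_s11]
    congr 1
    have e : ((C.1 - B.1) * (D.2 - B.2) - (D.1 - B.1) * (C.2 - B.2))
        = Real.cos d * Real.cos d + Real.cos d + (Real.sin d * Real.sin d + Real.sin d) := by
      simp [hB, hC, hD]; ring
    rw [e]
    have e2 : Real.cos d * Real.cos d + Real.cos d + (Real.sin d * Real.sin d + Real.sin d)
        = 1 + Real.cos d + Real.sin d := by
      have := Real.sin_sq_add_cos_sq d
      nlinarith
    rw [e2, abs_of_nonneg (by nlinarith)]
  -- half planes
  set U : Set (ℝ × ℝ) := {p : ℝ × ℝ | 0 < (1 + Real.cos d) * p.1 + Real.sin d * p.2 - Real.sin d}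
    with hU
  set W : Set (ℝ × ℝ) := {p : ℝ × ℝ | (1 + Real.cos d) * p.1 + Real.sin d * p.2 - Real.sin d < 0}
    with hW
  have hT1half : (convexHull ℝ {A, B, D} : Set (ℝ × ℝ))
      ⊆ {p : ℝ × ℝ | 0 ≤ (1 + Real.cos d) * p.1 + Real.sin d * p.2 - Real.sin d} := by
    apply convexHull_min
    · rintro p (rfl | rfl | rfl) <;> simp [hA, hB, hD] <;> nlinarith
    · intro p hp q hq a b ha hb hab
      simp only [Set.mem_setOf_eq, Prod.fst_add, Prod.snd_add, Prod.smul_fst, Prod.smul_snd,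
        smul_eq_mul] at *
      nlinarith
  have hT2half : (convexHull ℝ {B, C, D} : Set (ℝ × ℝ))
      ⊆ {p : ℝ × ℝ | (1 + Real.cos d) * p.1 + Real.sin d * p.2 - Real.sin d ≤ 0} := by
    apply convexHull_min
    · rintro p (rfl | rfl | rfl) <;> simp [hB, hC, hD] <;> nlinarith
    · intro p hp q hq a b ha hb hab
      simp only [Set.mem_setOf_eq, Prod.fst_add, Prod.snd_add, Prod.smul_fst, Prod.smul_snd,
        smul_eq_mul] at *
      nlinarith
  -- measurability
  have hmeas2 : MeasurableSet ((convexHull ℝ {B, C, D} : Set (ℝ × ℝ)) ∩ W) := by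
    apply MeasurableSet.inter
    · exact ((Set.Finite.isCompact_convexHull ℝ ((Set.finite_singleton D).insert C |>.insert B)).isClosed).measurableSet
    · exact measurableSet_lt (by fun_prop) measurable_const
  have hdisj : Disjoint ((convexHull ℝ {A, B, D} : Set (ℝ × ℝ)) ∩ U)
      ((convexHull ℝ {B, C, D} : Set (ℝ × ℝ)) ∩ W) := by
    rw [Set.disjoint_left]
    rintro p ⟨-, hp1⟩ ⟨-, hp2⟩
    rw [hU, Set.mem_setOf_eq] at hp1
    rw [hW, Set.mem_setOf_eq] at hp2
    linarith
  -- line is null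
  have hline : volume {p : ℝ × ℝ | (1 + Real.cos d) * p.1 + Real.sin d * p.2 - Real.sin d = 0} = 0 := by
    apply null_subset_line (1 + Real.cos d) (Real.sin d) (Real.sin d)
      (by intro ⟨h1, h2⟩; nlinarith)
    intro p hp
    simp only [Set.mem_setOf_eq] at hp
    linarith
  -- lower bounds on the two pieces
  have hp1 : ENNReal.ofReal ((1 + Real.cos d - Real.sin d)/2)
      ≤ volume ((convexHull ℝ {A, B, D} : Set (ℝ × ℝ)) ∩ U) := by
    rw [← hT1]
    have hsplit : (convexHull ℝ {A, B, D} : Set (ℝ × ℝ))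
        ⊆ ((convexHull ℝ {A, B, D} : Set (ℝ × ℝ)) ∩ U)
          ∪ {p : ℝ × ℝ | (1 + Real.cos d) * p.1 + Real.sin d * p.2 - Real.sin d = 0} := by
      intro p hp
      rcases lt_or_eq_of_le (show (0:ℝ) ≤ (1 + Real.cos d) * p.1 + Real.sin d * p.2 - Real.sin d from hT1half hp) with h | h
      · exact Or.inl ⟨hp, h⟩
      · exact Or.inr h.symm
    calc volume (convexHull ℝ {A, B, D} : Set (ℝ × ℝ)) ≤ _ := measure_mono hsplit
      _ ≤ volume ((convexHull ℝ {A, B, D} : Set (ℝ × ℝ)) ∩ U)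
          + volume {p : ℝ × ℝ | (1 + Real.cos d) * p.1 + Real.sin d * p.2 - Real.sin d = 0} :=
        measure_union_le _ _
      _ = volume ((convexHull ℝ {A, B, D} : Set (ℝ × ℝ)) ∩ U) := by rw [hline, add_zero]
  have hp2 : ENNReal.ofReal ((1 + Real.cos d + Real.sin d)/2)
      ≤ volume ((convexHull ℝ {B, C, D} : Set (ℝ × ℝ)) ∩ W) := by
    rw [← hT2]
    have hsplit : (convexHull ℝ {B, C, D} : Set (ℝ × ℝ))
        ⊆ ((convexHull ℝ {B, C, D} : Set (ℝ × ℝ)) ∩ W)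
          ∪ {p : ℝ × ℝ | (1 + Real.cos d) * p.1 + Real.sin d * p.2 - Real.sin d = 0} := by
      intro p hp
      rcases lt_or_eq_of_le (show (1 + Real.cos d) * p.1 + Real.sin d * p.2 - Real.sin d ≤ (0:ℝ) from hT2half hp) with h | h
      · exact Or.inl ⟨hp, h⟩
      · exact Or.inr h
    calc volume (convexHull ℝ {B, C, D} : Set (ℝ × ℝ)) ≤ _ := measure_mono hsplit
      _ ≤ volume ((convexHull ℝ {B, C, D} : Set (ℝ × ℝ)) ∩ W)
          + volume {p : ℝ × ℝ | (1 + Real.cos d) * p.1 + Real.sin d * p.2 - Real.sin d = 0} :=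
        measure_union_le _ _
      _ = volume ((convexHull ℝ {B, C, D} : Set (ℝ × ℝ)) ∩ W) := by rw [hline, add_zero]
  -- assemble
  have hsub1 : ((convexHull ℝ {A, B, D} : Set (ℝ × ℝ)) ∩ U)
      ∪ ((convexHull ℝ {B, C, D} : Set (ℝ × ℝ)) ∩ W)
      ⊆ convexHull ℝ (Set.range (vtx (th n) (epsQ n))) := by
    rintro p (⟨hp, -⟩ | ⟨hp, -⟩)
    · exact convexHull_mono (by
        rintro q (rfl | rfl | rfl)
        exacts [hmemA, hmemB, hmemD]) hp
    · exact convexHull_mono (by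
        rintro q (rfl | rfl | rfl)
        exacts [hmemB, hmemC, hmemD]) hp
  calc ENNReal.ofReal (149/100)
      ≤ ENNReal.ofReal ((1 + Real.cos d - Real.sin d)/2)
        + ENNReal.ofReal ((1 + Real.cos d + Real.sin d)/2) := by
        rw [← ENNReal.ofReal_add (by nlinarith) (by nlinarith)]
        apply ENNReal.ofReal_le_ofReal
        nlinarith
    _ ≤ volume ((convexHull ℝ {A, B, D} : Set (ℝ × ℝ)) ∩ U)
        + volume ((convexHull ℝ {B, C, D} : Set (ℝ × ℝ)) ∩ W) := add_le_add hp1 hp2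
    _ = volume (((convexHull ℝ {A, B, D} : Set (ℝ × ℝ)) ∩ U)
        ∪ ((convexHull ℝ {B, C, D} : Set (ℝ × ℝ)) ∩ W)) :=
        (measure_union hdisj hmeas2).symm
    _ ≤ volume (convexHull ℝ (Set.range (vtx (th n) (epsQ n)))) := measure_mono hsub1

end AuxSTMT11

/-- For every even n ≥ 6 there is an antipodal point set with a thick antipodal
polygon of strictly smaller area than some non-thick antipodal polygon. -/
theorem stmt_11 (n : ℕ) (hn : 6 ≤ n) (he : Even n) :
    ∃ θ : Fin n → ℝ, StrictMono θ ∧ (∀ i, θ i ∈ Set.Ico 0 Real.pi) ∧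
      ∃ ε ε' : Fin n → Bool, Thick θ ε ∧ ¬ Thick θ ε' ∧
        volume (apoly θ ε) < volume (apoly θ ε') := by
  have hd := dd_pos hn
  have hdle := dd_le hn
  have hπ3 : (3:ℝ) < Real.pi := Real.pi_gt_three
  refine ⟨th n, ?_, ?_, epsP n, epsQ n, thick_P hn he, not_thick_Q hn, ?_⟩
  · -- StrictMono
    intro i j hij
    have hij' : (i:ℕ) < (j:ℕ) := hij
    rcases Nat.lt_or_ge (j:ℕ) 2 with hj | hj
    · have hi : (i:ℕ) < 2 := by omega
      simp only [th, if_pos hi, if_pos hj]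
      have : ((i:ℕ):ℝ) < ((j:ℕ):ℝ) := by exact_mod_cast hij'
      nlinarith
    · rcases Nat.lt_or_ge (i:ℕ) 2 with hi | hi
      · simp only [th, if_pos hi, if_neg (by omega : ¬ (j:ℕ) < 2)]
        have h1 : ((i:ℕ):ℝ) ≤ 1 := by exact_mod_cast (by omega : (i:ℕ) ≤ 1)
        have h2 : (0:ℝ) ≤ (((j:ℕ) - 2 : ℕ):ℝ) * dd n := by positivity
        nlinarith
      · simp only [th, if_neg (by omega : ¬ (i:ℕ) < 2), if_neg (by omega : ¬ (j:ℕ) < 2)]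
        have h1 : (((i:ℕ) - 2 : ℕ):ℝ) < (((j:ℕ) - 2 : ℕ):ℝ) := by
          exact_mod_cast (by omega : (i:ℕ) - 2 < (j:ℕ) - 2)
        nlinarith
  · -- range in Ico 0 π
    intro i
    constructor
    · rcases Nat.lt_or_ge (i:ℕ) 2 with hi | hi
      · simp only [th, if_pos hi]; positivity
      · simp only [th, if_neg (by omega : ¬ (i:ℕ) < 2)]
        have h2 : (0:ℝ) ≤ (((i:ℕ) - 2 : ℕ):ℝ) * dd n := by positivity
        nlinarith
    · rcases Nat.lt_or_ge (i:ℕ) 2 with hi | hi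
      · simp only [th, if_pos hi]
        have h1 : ((i:ℕ):ℝ) ≤ 1 := by exact_mod_cast (by omega : (i:ℕ) ≤ 1)
        nlinarith
      · simp only [th, if_neg (by omega : ¬ (i:ℕ) < 2)]
        have h2 : (((i:ℕ) - 2 : ℕ):ℝ) * dd n ≤ 1/100 := jd_bound hn (by omega)
        nlinarith
  · -- area comparison
    show volume (apoly (th n) (epsP n)) < volume (apoly (th n) (epsQ n))
    unfold apoly
    calc volume (convexHull ℝ (Set.range (vtx (th n) (epsP n))))
        ≤ ENNReal.ofReal (10609/10000) := volP_le hn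
      _ < ENNReal.ofReal (149/100) := by
          rw [ENNReal.ofReal_lt_ofReal_iff (by norm_num)]
          norm_num
      _ ≤ volume (convexHull ℝ (Set.range (vtx (th n) (epsQ n)))) := volQ_ge hn
end

section
/- For every d ≥ 2 and every n ≥ d, there exists an antipodal point set S of 2n points on the unit sphere S^{d-1} ⊂ ℝ^d that admits a thick antipodal polytope, i.e., a choice X of one point from each antipodal pair such that every open half-space bounded by a hyperplane through the origin contains at least ⌈(n−d)/2⌉ points of X. -/
open scoped RealInnerProductSpace
open Polynomial

section AuxiliaryLemmas

lemma nonneg_of_neg_mul_nonpos {c t : ℝ} (hc : c < 0) (h : c * t ≤ 0) : 0 ≤ t := by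
  by_contra ht
  push_neg at ht
  nlinarith

lemma nonneg_of_pos_mul_nonneg {c t : ℝ} (hc : 0 < c) (h : 0 ≤ c * t) : 0 ≤ t := by
  by_contra ht
  push_neg at ht
  nlinarith

lemma alt_lemma : ∀ (D : ℕ) (p : ℝ[X]), p ≠ 0 → p.natDegree ≤ D →
    ∀ x : ℕ → ℝ, (∀ a b : ℕ, a < b → b ≤ D + 1 → x a < x b) →
    (∀ j : ℕ, j ≤ D + 1 → (-1 : ℝ) ^ j * p.eval (x j) ≤ 0) → False := by
  intro D
  induction D with
  | zero =>
    intro p hp hdeg x hx hsign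
    obtain ⟨c, rfl⟩ := Polynomial.natDegree_eq_zero.mp (Nat.le_zero.mp hdeg)
    have h0 := hsign 0 (by norm_num)
    have h1 := hsign 1 le_rfl
    simp at h0 h1
    exact hp (by rw [show c = 0 by linarith]; simp)
  | succ D IH =>
    intro p hp hdeg x hx hsign
    by_cases hroot : ∃ i ≤ D + 2, p.eval (x i) = 0
    · obtain ⟨i, hi, hzero⟩ := hroot
      obtain ⟨q, hq⟩ := Polynomial.dvd_iff_isRoot.mpr hzero
      have hqne : q ≠ 0 := by
        rintro rfl; exact hp (by rw [hq, mul_zero])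
      have hdq : q.natDegree ≤ D := by
        have hmul := Polynomial.natDegree_mul (Polynomial.X_sub_C_ne_zero (x i)) hqne
        rw [← hq, Polynomial.natDegree_X_sub_C] at hmul
        omega
      have heval : ∀ t : ℝ, p.eval t = (t - x i) * q.eval t := by
        intro t; rw [hq]; simp
      apply IH (-q) (neg_ne_zero.mpr hqne) (by simpa using hdq)
        (fun j => x (if j < i then j else j + 1))
      · intro a b hab hb
        split_ifs with h1 h2 h2
        · exact hx a b hab (by omega)
        · exact hx a (b + 1) (by omega) (by omega)
        · omega
        · exact hx (a + 1) (b + 1) (by omega) (by omega)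
      · intro j hj
        rw [Polynomial.eval_neg, mul_neg, neg_nonpos]
        split_ifs with h1
        · -- j < i, factor x j - x i < 0
          have hs := hsign j (by omega)
          rw [heval, mul_left_comm] at hs
          exact nonneg_of_neg_mul_nonpos
            (by have := hx j i h1 (by omega); linarith) hs
        · -- i ≤ j, use index j+1, factor positive
          have hs := hsign (j + 1) (by omega)
          rw [heval, pow_succ, mul_assoc, mul_left_comm] at hs
          have hpos : 0 < x (j + 1) - x i := by
            have := hx i (j + 1) (by omega) (by omega); linarith
          have hs' : 0 ≤ (x (j + 1) - x i) * ((-1 : ℝ) ^ j * q.eval (x (j + 1))) := by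
            nlinarith
          exact nonneg_of_pos_mul_nonneg hpos hs'
    · push_neg at hroot
      have h01 : x 0 < x 1 := hx 0 1 (by norm_num) (by omega)
      have h0 : p.eval (x 0) < 0 := by
        have := hsign 0 (by omega)
        have hne := hroot 0 (by omega)
        simp at this
        cases lt_or_eq_of_le this with
        | inl h => exact h
        | inr h => exact absurd h hne
      have h1 : 0 < p.eval (x 1) := by
        have := hsign 1 (by omega)
        have hne := hroot 1 (by omega)
        simp at this
        cases lt_or_eq_of_le this with
        | inl h => exact h
        | inr h => exact absurd h.symm hne
      have hcont : ContinuousOn (fun t => p.eval t) (Set.Icc (x 0) (x 1)) :=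
        (Polynomial.continuous p).continuousOn
      obtain ⟨z, hz, hfz⟩ := intermediate_value_Ioo (le_of_lt h01) hcont
        (Set.mem_Ioo.mpr ⟨h0, h1⟩)
      obtain ⟨q, hq⟩ := Polynomial.dvd_iff_isRoot.mpr hfz
      have hqne : q ≠ 0 := by
        rintro rfl; exact hp (by rw [hq, mul_zero])
      have hdq : q.natDegree ≤ D := by
        have hmul := Polynomial.natDegree_mul (Polynomial.X_sub_C_ne_zero z) hqne
        rw [← hq, Polynomial.natDegree_X_sub_C] at hmul
        omega
      have heval : ∀ t : ℝ, p.eval t = (t - z) * q.eval t := by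
        intro t; rw [hq]; simp
      apply IH (-q) (neg_ne_zero.mpr hqne) (by simpa using hdq) (fun j => x (j + 1))
      · intro a b hab hb
        exact hx (a + 1) (b + 1) (by omega) (by omega)
      · intro j hj
        rw [Polynomial.eval_neg, mul_neg, neg_nonpos]
        have hs := hsign (j + 1) (by omega)
        rw [heval, pow_succ, mul_assoc, mul_left_comm] at hs
        have hzlt : z < x (j + 1) := by
          cases j with
          | zero => exact hz.2
          | succ jj => exact lt_trans hz.2 (hx 1 (jj + 1 + 1) (by omega) (by omega))
        have hs' : 0 ≤ (x (j + 1) - z) * ((-1 : ℝ) ^ j * q.eval (x (j + 1))) := by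
          nlinarith
        exact nonneg_of_pos_mul_nonneg (by linarith) hs'


lemma extract_alt : ∀ (C : Finset ℕ), C.Nonempty →
    ∃ (h : ℕ) (t : List ℕ), (∀ x ∈ h :: t, x ∈ C) ∧
      (h :: t).Chain' (fun a b => b < a ∧ (a + b) % 2 = 1) ∧
      (∀ y ∈ C, y ≤ h) ∧ 2 * C.card ≤ h + 2 + t.length := by
  intro C
  induction C using Finset.strongInduction with
  | _ C IH =>
    intro hC
    set M := C.max' hC with hM
    have hMC : M ∈ C := C.max'_mem hC
    set C' := C.erase M with hC'def
    have hsub : C' ⊂ C := Finset.erase_ssubset hMC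
    have hcardE : C'.card = C.card - 1 := Finset.card_erase_of_mem hMC
    have hcpos : 1 ≤ C.card := Finset.card_pos.mpr hC
    by_cases hC' : C'.Nonempty
    · obtain ⟨h', t', hmem', hchain', hmax', hcard'⟩ := IH C' hsub hC'
      have hh'C' : h' ∈ C' := hmem' h' (by simp)
      have hh'M : h' < M := by
        have h1 : h' ≤ M := C.le_max' h' (Finset.mem_of_mem_erase hh'C')
        have h2 : h' ≠ M := (Finset.mem_erase.mp hh'C').1
        omega
      by_cases hpar : (M + h') % 2 = 1
      · refine ⟨M, h' :: t', ?_, ?_, ?_, ?_⟩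
        · intro x hx
          rcases List.mem_cons.mp hx with rfl | hx
          · exact hMC
          · exact Finset.mem_of_mem_erase (hmem' x hx)
        · exact List.isChain_cons_cons.mpr ⟨⟨hh'M, hpar⟩, hchain'⟩
        · intro y hy; exact C.le_max' y hy
        · simp only [List.length_cons]; omega
      · cases t' with
        | nil =>
          refine ⟨M, [], ?_, ?_, ?_, ?_⟩
          · intro x hx; simp at hx; subst hx; exact hMC
          · exact List.isChain_singleton _
          · intro y hy; exact C.le_max' y hy
          · simp at hcard' ⊢; omega
        | cons h₂ t₂ =>
          obtain ⟨⟨hlt2, hpar2⟩, hchain2⟩ := List.isChain_cons_cons.mp hchain'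
          refine ⟨M, h₂ :: t₂, ?_, ?_, ?_, ?_⟩
          · intro x hx
            rcases List.mem_cons.mp hx with rfl | hx
            · exact hMC
            · exact Finset.mem_of_mem_erase (hmem' x (by simp [hx]))
          · exact List.isChain_cons_cons.mpr ⟨⟨by omega, by omega⟩, hchain2⟩
          · intro y hy; exact C.le_max' y hy
          · simp only [List.length_cons] at hcard' ⊢; omega
    · have hCe : C' = ∅ := Finset.not_nonempty_iff_eq_empty.mp hC'
      have : C.card = 1 := by
        have := hcardE; rw [hCe] at this; simp at this; omega
      refine ⟨M, [], ?_, List.isChain_singleton _, fun y hy => C.le_max' y hy, by simp; omega⟩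
      intro x hx; simp at hx; subst hx; exact hMC

lemma neg_one_pow_congr' {a b : ℕ} (h : a % 2 = b % 2) : ((-1:ℝ)) ^ a = (-1) ^ b := by
  rcases Nat.even_or_odd a with ha | ha
  · have hb : Even b := by rw [Nat.even_iff] at *; omega
    rw [ha.neg_one_pow, hb.neg_one_pow]
  · have hb : Odd b := by
      rw [Nat.odd_iff] at *; omega
    rw [ha.neg_one_pow, hb.neg_one_pow]

set_option maxHeartbeats 1000000 in
lemma filter_pos_card (d n : ℕ) (hd : 2 ≤ d) (hn : d ≤ n) (p : ℝ[X]) (hp : p ≠ 0)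
    (hdeg : p.natDegree ≤ d - 1) :
    (n - d + 1) / 2 ≤
      ((Finset.range n).filter (fun i : ℕ => 0 < (-1:ℝ)^i * p.eval (i:ℝ))).card := by
  classical
  by_contra hA
  push_neg at hA
  obtain ⟨A, hAdef⟩ : ∃ A, A = (Finset.range n).filter (fun i : ℕ => 0 < (-1:ℝ)^i * p.eval (i:ℝ)) := ⟨_, rfl⟩
  obtain ⟨B, hBdef⟩ : ∃ B, B = (Finset.range n).filter (fun i : ℕ => ¬ (0 < (-1:ℝ)^i * p.eval (i:ℝ))) := ⟨_, rfl⟩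
  rw [← hAdef] at hA
  have hAB : A.card + B.card = n := by
    rw [hAdef, hBdef, Finset.card_filter_add_card_filter_not, Finset.card_range]
  have hBne : B.Nonempty := by
    rw [← Finset.card_pos]; omega
  obtain ⟨h, t, hmem, hchain, hmax, hcard⟩ := extract_alt B hBne
  have hhn : h < n := by
    have := hmem h (by simp)
    rw [hBdef] at this
    exact Finset.mem_range.mp (Finset.mem_filter.mp this).1
  obtain ⟨L, hLdef⟩ : ∃ L, L = (h :: t).length := ⟨_, rfl⟩
  have hLt : L = t.length + 1 := by simp [hLdef]
  have hL : d + 1 ≤ L := by omega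
  obtain ⟨g, hgdef⟩ : ∃ g : ℕ → ℕ, g = fun j => (h :: t).getD (L - 1 - j) 0 := ⟨_, rfl⟩
  have hget : ∀ j, j < L → ∀ (hh : L - 1 - j < (h :: t).length), g j = (h :: t).get ⟨L - 1 - j, hh⟩ := by
    intro j hj hh
    rw [hgdef]
    exact List.getD_eq_get (h :: t) 0 ⟨_, hh⟩
  have hmemB : ∀ j, j < L → g j ∈ B := by
    intro j hj
    rw [hget j hj (by omega)]
    exact hmem _ (List.get_mem (h :: t) _)
  have hconsec : ∀ j, j + 1 < L → g j < g (j + 1) ∧ (g (j + 1) + g j) % 2 = 1 := by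
    intro j hj
    rw [hget j (by omega) (by omega), hget (j + 1) (by omega) (by omega)]
    have hlen : (h :: t).length = L := hLdef.symm
    have hcg := List.isChain_iff_getElem.mp hchain (L - 2 - j) (by rw [hlen]; omega)
    have e1 : L - 2 - j + 1 = L - 1 - j := by omega
    have e2 : L - 1 - (j + 1) = L - 2 - j := by omega
    simp only [e1, e2, List.get_eq_getElem] at hcg ⊢
    exact ⟨hcg.1, hcg.2⟩
  have hmono : ∀ b, ∀ a, a < b → b < L → g a < g b := by
    intro b
    induction b with
    | zero => omega
    | succ b ihb =>
      intro a ha hb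
      rcases Nat.lt_succ_iff_lt_or_eq.mp ha with h' | h'
      · exact lt_trans (ihb a h' (by omega)) (hconsec b hb).1
      · subst h'; exact (hconsec a hb).1
  have hparity : ∀ j, j < L → (g j + j) % 2 = g 0 % 2 := by
    intro j
    induction j with
    | zero => simp
    | succ j ihj =>
      intro hj
      have h1 := (hconsec j hj).2
      have h2 := ihj (by omega)
      omega
  obtain ⟨P, hPdef⟩ : ∃ P : ℝ[X], P = if g 0 % 2 = 0 then p else -p := ⟨_, rfl⟩
  have hPne : P ≠ 0 := by
    rw [hPdef]; split_ifs
    · exact hp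
    · exact neg_ne_zero.mpr hp
  have hPdeg : P.natDegree ≤ d - 1 := by
    rw [hPdef]; split_ifs
    · exact hdeg
    · rw [Polynomial.natDegree_neg]; exact hdeg
  apply alt_lemma (d - 1) P hPne hPdeg (fun j => ((g j : ℕ) : ℝ))
  · intro a b hab hb
    have : d - 1 + 1 = d := by omega
    exact_mod_cast hmono b a hab (by omega)
  · intro j hj
    have hjL : j < L := by omega
    have hmB := hmemB j hjL
    rw [hBdef, Finset.mem_filter] at hmB
    have hle : (-1:ℝ) ^ (g j) * p.eval ((g j : ℕ) : ℝ) ≤ 0 := not_lt.mp hmB.2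
    have hpar := hparity j hjL
    rw [hPdef]
    split_ifs with h0
    · have : ((-1:ℝ)) ^ j = (-1) ^ (g j) := neg_one_pow_congr' (by omega)
      rw [this]; exact hle
    · have : ((-1:ℝ)) ^ (j + 1) = (-1) ^ (g j) := neg_one_pow_congr' (by omega)
      rw [Polynomial.eval_neg, mul_neg, ← neg_mul, ← neg_one_mul ((-1:ℝ)^j), ← pow_succ']
      rw [this]; exact hle

lemma pos_mul_iff_aux {c z : ℝ} (hc : 0 < c) : 0 < c * z ↔ 0 < z := by
  constructor
  · intro h
    by_contra hz
    push_neg at hz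
    nlinarith
  · exact fun h => mul_pos hc h


end AuxiliaryLemmas

/-- For every d ≥ 2 and n ≥ d there is an antipodal point set of 2n points on
the unit sphere in ℝ^d admitting a thick antipodal polytope: a choice X of one
point from each antipodal pair (so S = X ∪ (-X) with no antipodal pair inside X)
such that every open half-space bounded by a hyperplane through the origin
contains at least ⌈(n−d)/2⌉ points of X. -/
theorem stmt_14 (d n : ℕ) (hd : 2 ≤ d) (hn : d ≤ n) :
    ∃ X : Finset (EuclideanSpace ℝ (Fin d)),
      X.card = n ∧ (∀ x ∈ X, ‖x‖ = 1) ∧ (∀ x ∈ X, -x ∉ X) ∧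
      ∀ v : EuclideanSpace ℝ (Fin d), v ≠ 0 →
        (n - d + 1) / 2 ≤
          Set.ncard {x : EuclideanSpace ℝ (Fin d) | x ∈ X ∧ 0 < ⟪x, v⟫} := by
  classical
  obtain ⟨c, hc⟩ : ∃ c : ℕ → EuclideanSpace ℝ (Fin d),
      ∀ (i : ℕ) (j : Fin d), c i j = (i : ℝ) ^ (j : ℕ) :=
    ⟨fun i => (WithLp.equiv 2 (Fin d → ℝ)).symm (fun j => (i : ℝ) ^ (j : ℕ)),
      fun i j => rfl⟩
  have j0 : Fin d := ⟨0, by omega⟩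
  have hc0 : ∀ i, c i ≠ 0 := by
    intro i h
    have := congrArg (fun x => x (⟨0, by omega⟩ : Fin d)) h
    simp [hc] at this
  have hnorm : ∀ i, 0 < ‖c i‖ := fun i => norm_pos_iff.mpr (hc0 i)
  obtain ⟨r, hr⟩ : ∃ r : ℕ → ℝ, ∀ i, r i = ‖c i‖⁻¹ * (-1) ^ i := ⟨_, fun i => rfl⟩
  have hr0 : ∀ i, r i ≠ 0 := by
    intro i
    rw [hr]
    apply mul_ne_zero (inv_ne_zero (ne_of_gt (hnorm i)))
    intro h
    have := congrArg (|·|) h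
    simp [abs_pow] at this
  obtain ⟨w, hw⟩ : ∃ w : ℕ → EuclideanSpace ℝ (Fin d), ∀ i, w i = r i • c i :=
    ⟨_, fun i => rfl⟩
  have hwj : ∀ (i : ℕ) (j : Fin d), w i j = r i * (i : ℝ) ^ (j : ℕ) := by
    intro i j
    rw [hw, PiLp.smul_apply, hc, smul_eq_mul]
  have hwnorm : ∀ i, ‖w i‖ = 1 := by
    intro i
    rw [hw, norm_smul, hr]
    have h1 : ‖(‖c i‖⁻¹ * (-1 : ℝ) ^ i)‖ = ‖c i‖⁻¹ := by
      rw [Real.norm_eq_abs, abs_mul, abs_pow, abs_neg, abs_one, one_pow, mul_one,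
        abs_inv, abs_norm]
    rw [h1, inv_mul_cancel₀ (ne_of_gt (hnorm i))]
  have hinj : ∀ i i' : ℕ, w i = w i' → i = i' := by
    intro i i' h
    have h0 := congrArg (fun x => x (⟨0, by omega⟩ : Fin d)) h
    have h1 := congrArg (fun x => x (⟨1, by omega⟩ : Fin d)) h
    simp only [hwj] at h0 h1
    norm_num at h0 h1
    rw [h0] at h1
    have : (i : ℝ) = (i' : ℝ) := mul_left_cancel₀ (h0 ▸ hr0 i) h1
    exact_mod_cast this
  have hanti : ∀ i i' : ℕ, -(w i) = w i' → False := by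
    intro i i' h
    have h0 := congrArg (fun x => x (⟨0, by omega⟩ : Fin d)) h
    have h1 := congrArg (fun x => x (⟨1, by omega⟩ : Fin d)) h
    simp only [PiLp.neg_apply, hwj] at h0 h1
    norm_num at h0 h1
    rw [← h0] at h1
    have h2 : (-(r i)) * (i : ℝ) = (-(r i)) * (i' : ℝ) := by linarith
    have h3 : (i : ℝ) = (i' : ℝ) :=
      mul_left_cancel₀ (neg_ne_zero.mpr (hr0 i)) h2
    have h4 : i = i' := by exact_mod_cast h3
    subst h4
    have : r i = 0 := by linarith [h0]
    exact hr0 i this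
  refine ⟨(Finset.range n).image w, ?_, ?_, ?_, ?_⟩
  · rw [Finset.card_image_of_injOn (fun i _ i' _ h => hinj i i' h), Finset.card_range]
  · intro x hx
    obtain ⟨i, _, rfl⟩ := Finset.mem_image.mp hx
    exact hwnorm i
  · intro x hx hnx
    obtain ⟨i, _, rfl⟩ := Finset.mem_image.mp hx
    obtain ⟨i', _, heq⟩ := Finset.mem_image.mp hnx
    exact hanti i i' heq.symm
  · intro v hv
    obtain ⟨p, hpdef⟩ : ∃ p : ℝ[X], p = ∑ j : Fin d, C (v j) * X ^ (j : ℕ) := ⟨_, rfl⟩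
    have hpeval : ∀ x : ℝ, p.eval x = ∑ j : Fin d, v j * x ^ (j : ℕ) := by
      intro x
      rw [hpdef, Polynomial.eval_finset_sum]
      simp
    have hpdeg : p.natDegree ≤ d - 1 := by
      rw [hpdef]
      apply Polynomial.natDegree_sum_le_of_forall_le
      intro j _
      exact le_trans (Polynomial.natDegree_C_mul_X_pow_le (v j) (j : ℕ)) (by omega)
    have hpcoeff : ∀ j : Fin d, p.coeff (j : ℕ) = v j := by
      intro j
      rw [hpdef, Polynomial.finset_sum_coeff]
      rw [Finset.sum_eq_single j]
      · simp [Polynomial.coeff_C_mul, Polynomial.coeff_X_pow]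
      · intro j' _ hj'
        simp only [Polynomial.coeff_C_mul, Polynomial.coeff_X_pow]
        rw [if_neg (by simpa [Fin.val_inj] using (Ne.symm hj')), mul_zero]
      · simp
    have hpne : p ≠ 0 := by
      intro h0
      apply hv
      ext j
      rw [← hpcoeff j, h0]
      simp
    have hinner : ∀ i : ℕ, ⟪w i, v⟫ = r i * p.eval (i : ℝ) := by
      intro i
      rw [PiLp.inner_apply, hpeval, Finset.mul_sum]
      congr 1
      funext j
      simp only [RCLike.inner_apply, conj_trivial, hwj]
      ring
    have hpos : ∀ i : ℕ, (0 < ⟪w i, v⟫) ↔ 0 < (-1 : ℝ) ^ i * p.eval (i : ℝ) := by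
      intro i
      rw [hinner, hr, mul_assoc]
      exact pos_mul_iff_aux (inv_pos.mpr (hnorm i))
    have hsetq : {x : EuclideanSpace ℝ (Fin d) | x ∈ (Finset.range n).image w ∧ 0 < ⟪x, v⟫}
        = ↑(((Finset.range n).image w).filter (fun x => 0 < ⟪x, v⟫)) := by
      ext x
      simp [Finset.mem_filter]
    rw [hsetq, Set.ncard_coe_finset]
    refine le_trans (filter_pos_card d n hd hn p hpne hpdeg) ?_
    apply Finset.card_le_card_of_injOn w
    · intro i hi
      rw [Finset.mem_coe, Finset.mem_filter] at hi ⊢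
      exact ⟨Finset.mem_image_of_mem w hi.1, (hpos i).mpr hi.2⟩
    · intro i _ i' _ h
      exact hinj i i' h
end
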